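/- arXiv:1910.07744 — 11 statements merged into one kernel-verified Lean document; each statement's English description precedes it below -/
import Mathlib

section
/- Let S and S' be finite subsets of ℤ³ with 0 ∉ S and 0 ∉ S', and suppose that S ∪ (−S) generates ℤ³ as a group and S' ∪ (−S') generates ℤ³ as a group (so the associated graphs are connected). Let G(S) denote the simple graph with vertex set ℤ³ in which distinct points x, y are adjacent if and only if x − y ∈ S ∪ (−S), and define G(S') similarly. Then G(S) and G(S') are isomorphic as graphs if and only if there exists a ℤ-linear automorphism X of ℤ³ (i.e. an integer matrix X ∈ GL(3,ℤ)) such that X(S ∪ (−S)) = S' ∪ (−S'). -/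
/-- The lattice net graph on `ℤ³` determined by a set `S` of edge vectors:
`x` and `y` are adjacent iff `x ≠ y` and `x - y ∈ S ∪ (-S)`. -/
def latticeGraph (S : Finset (Fin 3 → ℤ)) : SimpleGraph (Fin 3 → ℤ) where
  Adj x y := x ≠ y ∧ (x - y ∈ S ∨ y - x ∈ S)
  symm := ⟨fun _ _ h => ⟨h.1.symm, h.2.symm⟩⟩
  loopless := ⟨fun _ h => h.1 rfl⟩

namespace LatticeNetAux

abbrev V3 := Fin 3 → ℤ

/-- The symmetrized finset of edge vectors. -/
def symFin (S : Finset V3) : Finset V3 := S ∪ S.image (fun v => -v)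

lemma mem_symFin {S : Finset V3} {v : V3} : v ∈ symFin S ↔ v ∈ S ∨ -v ∈ S := by
  unfold symFin
  simp only [Finset.mem_union, Finset.mem_image]
  constructor
  · rintro (h | ⟨a, ha, rfl⟩)
    · exact Or.inl h
    · exact Or.inr (by simpa using ha)
  · rintro (h | h)
    · exact Or.inl h
    · exact Or.inr ⟨-v, h, by simp⟩

lemma neg_mem_symFin {S : Finset V3} {v : V3} (h : v ∈ symFin S) : -v ∈ symFin S := by
  rcases mem_symFin.mp h with h | h
  · exact mem_symFin.mpr (Or.inr (by simpa using h))
  · exact mem_symFin.mpr (Or.inl h)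

lemma zero_not_mem_symFin {S : Finset V3} (hS0 : (0:V3) ∉ S) : (0:V3) ∉ symFin S := by
  intro h
  rcases mem_symFin.mp h with h | h
  · exact hS0 h
  · exact hS0 (by simpa using h)

lemma coe_symFin {S : Finset V3} : (symFin S : Set V3) = (S : Set V3) ∪ -(S : Set V3) := by
  ext v
  simp [mem_symFin, Set.mem_neg]

lemma adj_iff {S : Finset V3} {x y : V3} :
    (latticeGraph S).Adj x y ↔ x ≠ y ∧ x - y ∈ symFin S := by
  have h0 : (latticeGraph S).Adj x y ↔ x ≠ y ∧ (x - y ∈ S ∨ y - x ∈ S) := Iff.rfl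
  rw [h0, mem_symFin, neg_sub]

lemma adj_iff' {S : Finset V3} {x y : V3} :
    (latticeGraph S).Adj x y ↔ x ≠ y ∧ x - y ∈ (S : Set V3) ∪ -(S : Set V3) := by
  rw [adj_iff, ← coe_symFin, Finset.mem_coe]

lemma sum_symFin {S : Finset V3} (hS0 : (0:V3) ∉ S) : ∑ c ∈ symFin S, c = 0 := by
  refine Finset.sum_involution (fun a _ => -a) (fun a _ => add_neg_cancel a)
    (fun a ha hne heq => ?_) (fun a ha => neg_mem_symFin ha) (fun a ha => neg_neg a)
  apply hne
  funext i
  have h2 := congrFun heq i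
  simp only [Pi.neg_apply] at h2
  simp only [Pi.zero_apply]
  omega

lemma exists_list {S : Finset V3}
    (hSgen : AddSubgroup.closure ((S : Set V3) ∪ -(S : Set V3)) = ⊤) (v : V3) :
    ∃ L : List V3, (∀ a ∈ L, a ∈ symFin S) ∧ L.sum = v := by
  have hv : v ∈ AddSubgroup.closure ((S : Set V3) ∪ -(S : Set V3)) := by
    rw [hSgen]; trivial
  have hv' : v ∈ (AddSubgroup.closure ((S : Set V3) ∪ -(S : Set V3))).toAddSubmonoid := hv
  rw [AddSubgroup.closure_toAddSubmonoid] at hv'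
  have hset : ((S : Set V3) ∪ -(S : Set V3)) ∪ -((S : Set V3) ∪ -(S : Set V3)) =
      ((S : Set V3) ∪ -(S : Set V3)) := by
    ext w
    simp only [Set.mem_union, Set.mem_neg, neg_neg]
    tauto
  rw [hset] at hv'
  obtain ⟨L, hL, hsum⟩ := AddSubmonoid.exists_list_of_mem_closure hv'
  refine ⟨L, fun a ha => ?_, hsum⟩
  have h1 := hL a ha
  rw [← coe_symFin, Finset.mem_coe] at h1
  exact h1

lemma reachable_sum {S : Finset V3} (hS0 : (0:V3) ∉ S) :
    ∀ L : List V3, (∀ a ∈ L, a ∈ symFin S) → (latticeGraph S).Reachable L.sum 0 := by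
  intro L
  induction L with
  | nil =>
    intro _
    rw [List.sum_nil]
  | cons a L ih =>
    intro hmem
    have hrec := ih (fun b hb => hmem b (List.mem_cons_of_mem _ hb))
    have haS : a ∈ symFin S := hmem a (by simp)
    have hadj : (latticeGraph S).Adj (a + L.sum) L.sum := by
      rw [adj_iff]
      constructor
      · intro h
        have : a = 0 := by
          have := congrArg (fun w => w - L.sum) h
          simpa using this
        exact zero_not_mem_symFin hS0 (this ▸ haS)
      · simpa using haS
    rw [List.sum_cons]
    exact hadj.reachable.trans hrec

lemma reachable_zero {S : Finset V3} (hS0 : (0:V3) ∉ S)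
    (hSgen : AddSubgroup.closure ((S : Set V3) ∪ -(S : Set V3)) = ⊤) (v : V3) :
    (latticeGraph S).Reachable v 0 := by
  obtain ⟨L, hL, hsum⟩ := exists_list hSgen v
  have := reachable_sum hS0 L hL
  rwa [hsum] at this

/-- Translation as a graph homomorphism. -/
def transHom (S : Finset V3) (t : V3) : latticeGraph S →g latticeGraph S where
  toFun := fun u => u + t
  map_rel' := by
    intro a b hab
    rw [adj_iff] at hab ⊢
    refine ⟨?_, by simpa using hab.2⟩
    intro h
    exact hab.1 (by simpa using h)

lemma exists_bound (T : Finset V3) : ∃ B : ℤ, ∀ c ∈ T, ∀ i, |c i| ≤ B := by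
  classical
  induction T using Finset.induction with
  | empty => exact ⟨0, by simp⟩
  | @insert a T' ha ih =>
    obtain ⟨B, hB⟩ := ih
    refine ⟨max B (max |a 0| (max |a 1| |a 2|)), ?_⟩
    intro c hc i
    rcases Finset.mem_insert.mp hc with rfl | hc
    · fin_cases i <;> simp [le_max_iff, le_refl]
    · exact le_trans (hB c hc i) (le_max_left _ _)

lemma walk_bound {S' : Finset V3} (B : ℤ) (hB : ∀ c ∈ symFin S', ∀ i, |c i| ≤ B) :
    ∀ {y z : V3} (p : (latticeGraph S').Walk y z) (i : Fin 3),
      |y i - z i| ≤ (p.length : ℤ) * B := by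
  intro y z p
  induction p with
  | nil => intro i; simp
  | @cons y u z hadj q ih =>
    intro i
    have h1 : |y i - u i| ≤ B := by
      obtain ⟨-, hm⟩ := adj_iff.mp hadj
      have := hB _ hm i
      simpa using this
    have h2 := ih i
    have h3 : |y i - z i| ≤ |y i - u i| + |u i - z i| := abs_sub_le _ _ _
    have h4 : ((SimpleGraph.Walk.cons hadj q).length : ℤ) = (q.length : ℤ) + 1 := by
      simp [SimpleGraph.Walk.length_cons]
    rw [h4]
    have h5 : ((q.length : ℤ) + 1) * B = (q.length : ℤ) * B + B := by ring
    rw [h5]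
    linarith


lemma const_of_harm {S : Finset V3}
    (hgen : ∀ v : V3, ∃ L : List V3, (∀ a ∈ L, a ∈ symFin S) ∧ L.sum = v)
    (h : V3 → ℤ) (M : ℤ) (hbd : ∀ x, h x ≤ M)
    (hharm : ∀ x, ∑ c ∈ symFin S, h (x + c) = (symFin S).card • h x) :
    ∀ x, h x = h 0 := by
  obtain ⟨m, ⟨x₀, hx₀⟩, hm⟩ :=
    Int.exists_greatest_of_bdd (P := fun n => ∃ x, h x = n)
      ⟨M, by rintro z ⟨x, rfl⟩; exact hbd x⟩ ⟨h 0, 0, rfl⟩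
  have step : ∀ y, h y = m → ∀ c ∈ symFin S, h (y + c) = m := by
    intro y hy c hc
    by_contra hne
    have hlt : h (y + c) < m := lt_of_le_of_ne (hm _ ⟨_, rfl⟩) hne
    have hle : ∀ d ∈ symFin S, h (y + d) ≤ m := fun d _ => hm _ ⟨_, rfl⟩
    have hslt : ∑ d ∈ symFin S, h (y + d) < ∑ d ∈ symFin S, m :=
      Finset.sum_lt_sum hle ⟨c, hc, hlt⟩
    rw [hharm y, hy, Finset.sum_const] at hslt
    exact lt_irrefl _ hslt
  have hall : ∀ y, h y = m := by
    have hlist : ∀ L : List V3, (∀ a ∈ L, a ∈ symFin S) → h (x₀ + L.sum) = m := by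
      intro L
      induction L with
      | nil => intro _; simpa using hx₀
      | cons a L ih =>
        intro hmem
        have h1 := ih (fun b hb => hmem b (List.mem_cons_of_mem _ hb))
        have harg : x₀ + (a :: L).sum = (x₀ + L.sum) + a := by
          rw [List.sum_cons]; ring
        rw [harg]
        exact step _ h1 a (hmem a (by simp))
    intro y
    obtain ⟨L, hL, hsumL⟩ := hgen (y - x₀)
    have h2 := hlist L hL
    rw [hsumL] at h2
    have harg : x₀ + (y - x₀) = y := by ring
    rwa [harg] at h2
  intro x
  rw [hall x, hall 0]

end LatticeNetAux

open LatticeNetAux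

theorem stmt0 (S S' : Finset (Fin 3 → ℤ))
    (hS0 : (0 : Fin 3 → ℤ) ∉ S) (hS'0 : (0 : Fin 3 → ℤ) ∉ S')
    (hSgen : AddSubgroup.closure ((S : Set (Fin 3 → ℤ)) ∪ -(S : Set (Fin 3 → ℤ))) = ⊤)
    (hS'gen : AddSubgroup.closure ((S' : Set (Fin 3 → ℤ)) ∪ -(S' : Set (Fin 3 → ℤ))) = ⊤) :
    Nonempty (latticeGraph S ≃g latticeGraph S') ↔
      ∃ X : (Fin 3 → ℤ) ≃ₗ[ℤ] (Fin 3 → ℤ),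
        X '' ((S : Set (Fin 3 → ℤ)) ∪ -(S : Set (Fin 3 → ℤ))) =
          (S' : Set (Fin 3 → ℤ)) ∪ -(S' : Set (Fin 3 → ℤ)) := by
  constructor
  · rintro ⟨e⟩
    -- Step 1: the "harmonicity" identity for e, coming from symmetry of edge sets.
    have harm : ∀ x : V3, ∑ c ∈ symFin S, ((e (x + c) : V3) - e x) = 0 := by
      intro x
      rw [← sum_symFin hS'0]
      apply Finset.sum_bij (i := fun c _ => (e (x + c) : V3) - e x)
      · intro a ha
        have hadj : (latticeGraph S).Adj (x + a) x := by
          rw [adj_iff]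
          refine ⟨?_, by simpa using ha⟩
          intro h
          have : a = 0 := by
            have := congrArg (fun w => w - x) h
            simpa using this
          exact zero_not_mem_symFin hS0 (this ▸ ha)
        have hadj' : (latticeGraph S').Adj (e (x + a)) (e x) := e.map_rel_iff.mpr hadj
        exact (adj_iff.mp hadj').2
      · intro a₁ h₁ a₂ h₂ heq
        have h3 : (e (x + a₁) : V3) = e (x + a₂) := by
          have := congrArg (fun w => w + (e x : V3)) heq
          simpa using this
        have := e.injective h3
        exact add_left_cancel this
      · intro b hb
        have hadj' : (latticeGraph S').Adj ((e x : V3) + b) (e x) := by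
          rw [adj_iff]
          refine ⟨?_, by simpa using hb⟩
          intro h
          have : b = 0 := by
            have := congrArg (fun w => w - (e x : V3)) h
            simpa using this
          exact zero_not_mem_symFin hS'0 (this ▸ hb)
        have hadj : (latticeGraph S).Adj (e.symm ((e x : V3) + b)) x := by
          have := e.symm.map_rel_iff.mpr hadj'
          simpa using this
        refine ⟨e.symm ((e x : V3) + b) - x, ?_, ?_⟩
        · have := (adj_iff.mp hadj).2
          simpa using this
        · have hx : x + (e.symm ((e x : V3) + b) - x) = e.symm ((e x : V3) + b) := by ring
          rw [hx]
          simp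
      · intro a ha
        rfl
    -- Step 2: harmonicity of difference functions.
    have hsum : ∀ v x : V3, ∑ c ∈ symFin S, ((e (x + c + v) : V3) - e (x + c)) =
        (symFin S).card • ((e (x + v) : V3) - e x) := by
      intro v x
      have h1 := harm (x + v)
      have h2 := harm x
      calc ∑ c ∈ symFin S, ((e (x + c + v) : V3) - e (x + c))
          = ∑ c ∈ symFin S,
              ((((e (x + v + c) : V3) - e (x + v)) - ((e (x + c) : V3) - e x))
                + ((e (x + v) : V3) - e x)) := by
            apply Finset.sum_congr rfl
            intro c hc
            have harg : x + c + v = x + v + c := by ring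
            rw [harg]
            abel
        _ = (symFin S).card • ((e (x + v) : V3) - e x) := by
            rw [Finset.sum_add_distrib, Finset.sum_sub_distrib, h1, h2, Finset.sum_const]
            abel
    -- Step 3: difference functions are bounded (via walks).
    obtain ⟨B, hB⟩ := exists_bound (symFin S')
    have hbound : ∀ v : V3, ∃ M : ℤ, ∀ x : V3, ∀ i, |((e (x + v) : V3) - e x) i| ≤ M := by
      intro v
      obtain ⟨p⟩ := reachable_zero hS0 hSgen v
      refine ⟨(p.length : ℤ) * B, ?_⟩
      intro x i
      obtain ⟨q, hq⟩ : ∃ q : (latticeGraph S').Walk (e (x + v)) (e x), q.length = p.length := by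
        refine ⟨(((p.map (transHom S x)).copy ?_ ?_).map (SimpleGraph.Iso.toHom e)), ?_⟩
        · show v + x = x + v
          ring
        · show 0 + x = x
          ring
        · rw [SimpleGraph.Walk.length_map, SimpleGraph.Walk.length_copy,
            SimpleGraph.Walk.length_map]
      have hw := walk_bound B hB q i
      rw [hq] at hw
      simpa using hw
    -- Step 4: maximum principle ⇒ difference functions are constant.
    have key : ∀ v x : V3, (e (x + v) : V3) - e x = (e v : V3) - e 0 := by
      intro v
      obtain ⟨M, hM⟩ := hbound v
      have hgen := fun w => exists_list hSgen w
      have hconst : ∀ i : Fin 3, ∀ x : V3,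
          ((e (x + v) : V3) - e x) i = ((e (0 + v) : V3) - e 0) i := by
        intro i
        have hbd : ∀ x : V3, ((e (x + v) : V3) - e x) i ≤ M :=
          fun x => le_trans (le_abs_self _) (hM x i)
        have hharmc : ∀ x : V3, ∑ c ∈ symFin S, ((e (x + c + v) : V3) - e (x + c)) i =
            (symFin S).card • (((e (x + v) : V3) - e x) i) := by
          intro x
          have h2 := congrFun (hsum v x) i
          rw [Finset.sum_apply] at h2
          simpa using h2
        exact const_of_harm hgen (fun x => ((e (x + v) : V3) - e x) i) M hbd hharmc
      intro x
      funext i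
      have := hconst i x
      rwa [zero_add] at this
    -- Step 5: build the linear equivalence.
    have hadd : ∀ a b : V3, ((e (a + b) : V3) - e 0) = ((e a : V3) - e 0) + ((e b : V3) - e 0) := by
      intro a b
      have h' := key b a
      have h2 : (e (a + b) : V3) = (e b : V3) - e 0 + e a := by
        have := congrArg (fun w => w + (e a : V3)) h'
        simpa [sub_add_cancel] using this
      rw [h2]
      ring
    let ψ : V3 ≃ V3 := e.toEquiv.trans (Equiv.subRight (e 0 : V3))
    have hψ : ∀ x, ψ x = (e x : V3) - e 0 := fun _ => rfl
    let A : V3 ≃+ V3 := AddEquiv.mk' ψ (fun a b => by rw [hψ, hψ, hψ]; exact hadd a b)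
    refine ⟨A.toIntLinearEquiv, ?_⟩
    have hXapp : ∀ x, ((A.toIntLinearEquiv : V3 ≃ₗ[ℤ] V3) : V3 → V3) x = (e x : V3) - e 0 := fun _ => rfl
    apply Set.Subset.antisymm
    · rintro _ ⟨z, hz, rfl⟩
      rw [hXapp]
      have hzS : z ∈ symFin S := by
        rw [← Finset.mem_coe, coe_symFin]; exact hz
      have hadj : (latticeGraph S).Adj z 0 := by
        rw [adj_iff]
        refine ⟨fun h => zero_not_mem_symFin hS0 (h ▸ hzS), by simpa using hzS⟩
      have hadj' : (latticeGraph S').Adj (e z) (e 0) := e.map_rel_iff.mpr hadj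
      have := (adj_iff'.mp hadj').2
      exact this
    · intro z' hz'
      have hz'S : z' ∈ symFin S' := by
        rw [← Finset.mem_coe, coe_symFin]; exact hz'
      have hadj' : (latticeGraph S').Adj (z' + (e 0 : V3)) (e 0) := by
        rw [adj_iff]
        constructor
        · intro h
          have hz0 : z' = 0 := by
            have := congrArg (fun w => w - (e 0 : V3)) h
            simpa using this
          exact zero_not_mem_symFin hS'0 (hz0 ▸ hz'S)
        · simpa using hz'S
      have hadj : (latticeGraph S).Adj (e.symm (z' + (e 0 : V3))) 0 := by
        have := e.symm.map_rel_iff.mpr hadj'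
        simpa using this
      refine ⟨e.symm (z' + (e 0 : V3)), ?_, ?_⟩
      · rw [← coe_symFin, Finset.mem_coe] at *
        have := (adj_iff.mp hadj).2
        simpa using this
      · rw [hXapp]
        simp
  · rintro ⟨X, hX⟩
    refine ⟨⟨X.toEquiv, ?_⟩⟩
    intro a b
    rw [adj_iff', adj_iff']
    have hmem : ∀ w : V3, X w ∈ (S' : Set V3) ∪ -(S' : Set V3) ↔
        w ∈ (S : Set V3) ∪ -(S : Set V3) := by
      intro w
      rw [← hX]
      exact X.injective.mem_set_image
    constructor
    · rintro ⟨hne, hm⟩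
      refine ⟨fun h => hne (by rw [h]), ?_⟩
      have : X (a - b) ∈ (S' : Set V3) ∪ -(S' : Set V3) := by
        rwa [map_sub]
      exact (hmem _).mp this
    · rintro ⟨hne, hm⟩
      refine ⟨fun h => hne (X.injective h), ?_⟩
      have : X (a - b) ∈ (S' : Set V3) ∪ -(S' : Set V3) := (hmem _).mpr hm
      rwa [map_sub] at this
end

section
/- Let Λ be a set of nonzero vectors in ℤ³ all of whose coordinates lie in {−1, 0, 1}, with Λ ∩ (−Λ) = ∅. Suppose that the family of closed segments { [v, v + λ] : v ∈ ℤ³, λ ∈ Λ } in ℝ³ is pairwise essentially disjoint, i.e. any two distinct segments of the family intersect at most in a point that is an endpoint of both. Then |Λ| ≤ 7. -/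
/-- The real vector in `ℝ³` corresponding to an integer vector in `ℤ³`. -/
def intVec (m : Fin 3 → ℤ) : Fin 3 → ℝ := fun i => (m i : ℝ)

theorem stmt3 (Λ : Finset (Fin 3 → ℤ))
    (hne : ∀ l ∈ Λ, l ≠ 0)
    (hcoord : ∀ l ∈ Λ, ∀ i, l i = -1 ∨ l i = 0 ∨ l i = 1)
    (hneg : ∀ l ∈ Λ, -l ∉ Λ)
    (hdisj : ∀ v v' : Fin 3 → ℤ, ∀ l ∈ Λ, ∀ l' ∈ Λ,
      segment ℝ (intVec v) (intVec v + intVec l) ≠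
        segment ℝ (intVec v') (intVec v' + intVec l') →
      ∀ p, p ∈ segment ℝ (intVec v) (intVec v + intVec l) →
        p ∈ segment ℝ (intVec v') (intVec v' + intVec l') →
        (p = intVec v ∨ p = intVec v + intVec l) ∧
        (p = intVec v' ∨ p = intVec v' + intVec l')) :
    Λ.card ≤ 7 := by
  classical
  -- Key claim: two elements of Λ with the same support are equal.
  have key : ∀ l ∈ Λ, ∀ l' ∈ Λ, (∀ i, l i = 0 ↔ l' i = 0) → l = l' := by
    intro l hl l' hl' hsupp
    by_contra hner
    have hnegr : l ≠ -l' := by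
      intro h
      exact hneg l' hl' (h ▸ hl)
    -- pick a coordinate where l is nonzero
    obtain ⟨i₀, hi₀⟩ : ∃ i, l i ≠ 0 := by
      by_contra h
      push_neg at h
      exact hne l hl (funext h)
    have hi₀' : l' i₀ ≠ 0 := fun h => hi₀ ((hsupp i₀).mpr h)
    -- the translation vector
    set v' : Fin 3 → ℤ := fun i => (l i - l' i) / 2 with hv'
    have hdiv : ∀ i, 2 * v' i = l i - l' i := by
      intro i
      have h1 := hcoord l hl i
      have h2 := hcoord l' hl' i
      have h3 := hsupp i
      simp only [hv']
      omega
    have hv'' : ∀ i, (v' i : ℝ) = ((l i : ℝ) - (l' i : ℝ)) / 2 := by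
      intro i
      have := hdiv i
      have : (2 : ℝ) * (v' i : ℝ) = (l i : ℝ) - (l' i : ℝ) := by
        exact_mod_cast congrArg (fun z : ℤ => (z : ℝ)) this
      linarith
    -- the crossing point
    set p : Fin 3 → ℝ := fun i => (l i : ℝ) / 2 with hp
    have hmem1 : p ∈ segment ℝ (intVec 0) (intVec 0 + intVec l) := by
      refine ⟨1/2, 1/2, by norm_num, by norm_num, by norm_num, ?_⟩
      funext i
      simp only [Pi.add_apply, Pi.smul_apply, smul_eq_mul, intVec, hp, Pi.zero_apply, Int.cast_zero]
      push_cast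
      ring
    have hmem2 : p ∈ segment ℝ (intVec v') (intVec v' + intVec l') := by
      refine ⟨1/2, 1/2, by norm_num, by norm_num, by norm_num, ?_⟩
      funext i
      simp only [Pi.add_apply, Pi.smul_apply, smul_eq_mul, intVec, hp]
      rw [hv'' i]
      have h1 := hcoord l hl i
      have h2 := hcoord l' hl' i
      have h3 := hsupp i
      ring
    -- the two segments are distinct
    have hseg : segment ℝ (intVec 0) (intVec 0 + intVec l) ≠
        segment ℝ (intVec v') (intVec v' + intVec l') := by
      intro heq
      have hmemL : intVec 0 + intVec l ∈ segment ℝ (intVec v') (intVec v' + intVec l') := by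
        rw [← heq]; exact right_mem_segment ℝ _ _
      obtain ⟨a, b, ha, hb, hab, hsum⟩ := hmemL
      -- coordinatewise: (l i : ℝ) = v' i + b * l' i
      have hcoordeq : ∀ i, 2 * b * (l' i : ℝ) = (l i : ℝ) + (l' i : ℝ) := by
        intro i
        have := congrFun hsum i
        simp only [Pi.add_apply, Pi.smul_apply, smul_eq_mul, intVec, Pi.zero_apply,
          Int.cast_zero] at this
        have hv := hv'' i
        have ha1 : a = 1 - b := by linarith
        rw [ha1] at this
        rw [hv] at this
        push_cast at this ⊢
        linear_combination 2 * this
      -- at i₀, both l i₀ and l' i₀ are ±1, so b = 0 or b = 1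
      have h1 := hcoord l hl i₀
      have h2 := hcoord l' hl' i₀
      have hb01 : b = 0 ∨ b = 1 := by
        have heq0 := hcoordeq i₀
        rcases h1 with h | h | h <;> rcases h2 with h' | h' | h' <;>
          simp [h, h'] at heq0 hi₀ hi₀' ⊢ <;> first
            | (left; linarith) | (right; linarith) | linarith
      rcases hb01 with hb0 | hb1
      · apply hnegr
        funext i
        have := hcoordeq i
        rw [hb0] at this
        have : (l i : ℝ) = -(l' i : ℝ) := by linarith
        have : l i = -(l' i) := by exact_mod_cast this
        simpa using this
      · apply hner
        funext i
        have := hcoordeq i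
        rw [hb1] at this
        have : (l i : ℝ) = (l' i : ℝ) := by linarith
        exact_mod_cast this
    have := (hdisj 0 v' l hl l' hl' hseg p hmem1 hmem2).1
    rcases this with h | h
    · have := congrFun h i₀
      simp only [hp, intVec] at this
      have : (l i₀ : ℝ) = 0 := by
        norm_num at this
        simpa using this
      exact hi₀ (by exact_mod_cast this)
    · have := congrFun h i₀
      simp only [hp, intVec, Pi.add_apply] at this
      have hz : (l i₀ : ℝ) = 0 := by
        norm_num at this
        linarith
      exact hi₀ (by exact_mod_cast hz)
  -- injectivity of the support map
  set f : (Fin 3 → ℤ) → (Fin 3 → Bool) := fun l => fun i => decide (l i ≠ 0) with hf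
  have hinj : Set.InjOn f Λ := by
    intro l hl l' hl' heq
    apply key l hl l' hl'
    intro i
    have := congrFun heq i
    simp only [hf, decide_eq_decide] at this
    constructor
    · intro h
      by_contra h'
      exact (this.mpr h') h
    · intro h
      by_contra h'
      exact (this.mp h') h
  have hsub : Λ.image f ⊆ Finset.univ.erase (fun _ => false) := by
    intro g hg
    simp only [Finset.mem_image] at hg
    obtain ⟨l, hl, rfl⟩ := hg
    refine Finset.mem_erase.mpr ⟨?_, Finset.mem_univ _⟩
    intro h
    apply hne l hl
    funext i
    have := congrFun h i
    simp only [hf, decide_eq_false_iff_not, not_not] at this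
    exact this
  have hcard : (Finset.univ.erase (fun _ : Fin 3 => false)).card = 7 := by
    rw [Finset.card_erase_of_mem (Finset.mem_univ _), Finset.card_univ]
    simp [Fintype.card_fun]
  calc Λ.card = (Λ.image f).card := (Finset.card_image_of_injOn hinj).symm
    _ ≤ (Finset.univ.erase (fun _ : Fin 3 => false)).card := Finset.card_le_card hsub
    _ = 7 := hcard
end

section
/- Let q ∈ ℝ³ with q ∉ ℤ³, and let Λ be a set of vectors in ℤ³ all of whose coordinates lie in {−1, 0, 1}. Suppose that the family of closed segments { [q + v, λ + v] : v ∈ ℤ³, λ ∈ Λ } in ℝ³ is pairwise essentially disjoint, i.e. any two distinct segments of the family intersect at most in a point that is an endpoint of both. Then |Λ| ≤ 8. -/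
lemma seg_eq_endpoints {E : Type*} [AddCommGroup E] [Module ℝ E] [NoZeroSMulDivisors ℝ E]
    {a b c d : E} (h : segment ℝ a b = segment ℝ c d) :
    (a = c ∧ b = d) ∨ (a = d ∧ b = c) := by
  by_cases hab : b = a
  · subst hab
    rw [segment_same] at h
    have hc : c ∈ ({b} : Set E) := h ▸ left_mem_segment ℝ c d
    have hd : d ∈ ({b} : Set E) := h ▸ right_mem_segment ℝ c d
    simp only [Set.mem_singleton_iff] at hc hd
    exact Or.inl ⟨hc.symm, hd.symm⟩
  · have hba : b - a ≠ 0 := sub_ne_zero.2 hab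
    have hc : c ∈ segment ℝ a b := h ▸ left_mem_segment ℝ c d
    have hd : d ∈ segment ℝ a b := h ▸ right_mem_segment ℝ c d
    have ha : a ∈ segment ℝ c d := h ▸ left_mem_segment ℝ a b
    have hb : b ∈ segment ℝ c d := h ▸ right_mem_segment ℝ a b
    rw [segment_eq_image'] at hc hd ha hb
    obtain ⟨s, hs, hcs⟩ := hc
    obtain ⟨t, ht, hdt⟩ := hd
    obtain ⟨u, hu, hau⟩ := ha
    obtain ⟨w, hw, hbw⟩ := hb
    dsimp only at hcs hdt hau hbw
    simp only [Set.mem_Icc] at hs ht hu hw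
    have hdc : d - c = (t - s) • (b - a) := by
      rw [← hcs, ← hdt, sub_smul]; abel
    have hu' : s + u * (t - s) = 0 := by
      have h1 : c + u • (d - c) = a := hau
      rw [hdc, ← hcs] at h1
      have h2 : (s + u * (t - s)) • (b - a) = a + s • (b - a) + u • ((t - s) • (b - a)) - a := by
        rw [add_smul, mul_smul]; abel
      rw [h1, sub_self] at h2
      rcases smul_eq_zero.1 h2 with h' | h'
      · exact h'
      · exact absurd h' hba
    have hw' : s + w * (t - s) = 1 := by
      have h1 : c + w • (d - c) = b := hbw
      rw [hdc, ← hcs] at h1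
      have h2 : (s + w * (t - s) - 1) • (b - a) =
          a + s • (b - a) + w • ((t - s) • (b - a)) - b := by
        rw [sub_smul, add_smul, mul_smul, one_smul]; abel
      rw [h1, sub_self] at h2
      rcases smul_eq_zero.1 h2 with h' | h'
      · linarith [sub_eq_zero.1 h']
      · exact absurd h' hba
    have hprod : (w - u) * (t - s) = 1 := by nlinarith [hu', hw']
    have hts : t - s = 1 ∨ s - t = 1 := by
      rcases le_total s t with h' | h'
      · left
        have h2 : 1 ≤ t - s := by nlinarith
        linarith
      · right
        have h2 : 1 ≤ s - t := by nlinarith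
        linarith
    rcases hts with h' | h'
    · have hs0 : s = 0 := by linarith
      have ht1 : t = 1 := by linarith
      left
      constructor
      · rw [← hcs, hs0]; simp
      · rw [← hdt, ht1]; simp
    · have hs1 : s = 1 := by linarith
      have ht0 : t = 0 := by linarith
      right
      constructor
      · rw [← hdt, ht0]; simp
      · rw [← hcs, hs1]; simp

theorem stmt4 (q : Fin 3 → ℝ)
    (hq : ∀ m : Fin 3 → ℤ, q ≠ intVec m)
    (Λ : Finset (Fin 3 → ℤ))
    (hcoord : ∀ l ∈ Λ, ∀ i, l i = -1 ∨ l i = 0 ∨ l i = 1)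
    (hdisj : ∀ v v' : Fin 3 → ℤ, ∀ l ∈ Λ, ∀ l' ∈ Λ,
      segment ℝ (q + intVec v) (intVec l + intVec v) ≠
        segment ℝ (q + intVec v') (intVec l' + intVec v') →
      ∀ p, p ∈ segment ℝ (q + intVec v) (intVec l + intVec v) →
        p ∈ segment ℝ (q + intVec v') (intVec l' + intVec v') →
        (p = q + intVec v ∨ p = intVec l + intVec v) ∧
        (p = q + intVec v' ∨ p = intVec l' + intVec v')) :
    Λ.card ≤ 8 := by
  classical
  have hinj : Set.InjOn (fun (l : Fin 3 → ℤ) (i : Fin 3) => ((l i : ZMod 2))) Λ := by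
    intro l hl l' hl' hfe
    by_contra hne
    have hdvd : ∀ i, (2:ℤ) ∣ l' i - l i := by
      intro i
      have h1 : ((l i : ZMod 2)) = ((l' i : ZMod 2)) := congrFun hfe i
      have h2 : l i ≡ l' i [ZMOD 2] := (ZMod.intCast_eq_intCast_iff _ _ _).1 h1
      exact_mod_cast h2.dvd
    set v : Fin 3 → ℤ := fun i => (l' i - l i) / 2 with hv
    have h2v : ∀ i, 2 * v i = l' i - l i := fun i => Int.mul_ediv_cancel' (hdvd i)
    have hVr : ∀ i, (v i : ℝ) = ((l' i : ℝ) - (l i : ℝ)) / 2 := by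
      intro i
      have h3 : (2:ℝ) * (v i : ℝ) = (l' i : ℝ) - (l i : ℝ) := by exact_mod_cast h2v i
      linarith
    set p : Fin 3 → ℝ := fun i => (q i + (l' i : ℝ)) / 2 with hp
    have hp1 : p ∈ segment ℝ (q + intVec v) (intVec l + intVec v) := by
      refine ⟨1/2, 1/2, by norm_num, by norm_num, by norm_num, ?_⟩
      funext i
      simp only [Pi.smul_apply, Pi.add_apply, smul_eq_mul, intVec, hp]
      have := hVr i
      ring_nf
      linarith
    have hp2 : p ∈ segment ℝ (q + intVec 0) (intVec l' + intVec 0) := by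
      refine ⟨1/2, 1/2, by norm_num, by norm_num, by norm_num, ?_⟩
      funext i
      simp only [Pi.smul_apply, Pi.add_apply, smul_eq_mul, intVec, hp, Pi.zero_apply,
        Int.cast_zero, add_zero]
      ring
    have hne_seg : segment ℝ (q + intVec v) (intVec l + intVec v) ≠
        segment ℝ (q + intVec 0) (intVec l' + intVec 0) := by
      intro hEq
      rcases seg_eq_endpoints hEq with ⟨h1, h2⟩ | ⟨h1, h2⟩
      · have hv0 : ∀ i, (v i : ℝ) = 0 := by
          intro i
          have := congrFun h1 i
          simp [intVec] at this
          exact_mod_cast this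
        apply hne
        funext i
        have h4 := congrFun h2 i
        simp [intVec] at h4
        have h5 := hv0 i
        exact_mod_cast (by linarith : (l i : ℝ) = (l' i : ℝ))
      · refine hq (fun i => l' i - v i) ?_
        funext i
        have h4 := congrFun h1 i
        simp [intVec] at h4 ⊢
        push_cast
        linarith
    obtain ⟨hA, _⟩ := hdisj v 0 l hl l' hl' hne_seg p hp1 hp2
    apply hq l
    funext i
    have hVi := hVr i
    rcases hA with h | h <;>
    · have h4 := congrFun h i
      simp [intVec, hp] at h4
      simp [intVec]
      linarith
  calc Λ.card ≤ (Finset.univ : Finset (Fin 3 → ZMod 2)).card :=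
        Finset.card_le_card_of_injOn _ (fun a _ => Finset.mem_univ _) hinj
    _ = 8 := by simp [Fintype.card_fun]
end

section
/- Let p ∈ ℝ³, let n ≥ 2 be an integer, and let k, l ∈ ℤ³ be linearly independent vectors such that k − l = n·t for some t ∈ ℤ³. Then the closed segments [p, p + k] and [p + t, p + t + l] are distinct, and the point p + (1/n)k belongs to both segments but is an endpoint of neither. -/
theorem stmt6 (p : Fin 3 → ℝ) (n : ℕ) (hn : 2 ≤ n)
    (k l : Fin 3 → ℤ) (hkl : LinearIndependent ℤ ![k, l])
    (t : Fin 3 → ℤ) (ht : k - l = (n : ℤ) • t) :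
    segment ℝ p (p + intVec k) ≠
      segment ℝ (p + intVec t) (p + intVec t + intVec l) ∧
    p + (n : ℝ)⁻¹ • intVec k ∈ segment ℝ p (p + intVec k) ∧
    p + (n : ℝ)⁻¹ • intVec k ∈ segment ℝ (p + intVec t) (p + intVec t + intVec l) ∧
    p + (n : ℝ)⁻¹ • intVec k ≠ p ∧
    p + (n : ℝ)⁻¹ • intVec k ≠ p + intVec k ∧
    p + (n : ℝ)⁻¹ • intVec k ≠ p + intVec t ∧
    p + (n : ℝ)⁻¹ • intVec k ≠ p + intVec t + intVec l := by
  have hpair := LinearIndependent.pair_iff.1 hkl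
  have hk0 : k ≠ 0 := by
    intro h
    have := (hpair 1 0 (by simp [h])).1
    exact one_ne_zero this
  have hl0 : l ≠ 0 := by
    intro h
    have := (hpair 0 1 (by simp [h])).2
    exact one_ne_zero this
  have hn0 : (n : ℝ) ≠ 0 := by positivity
  have hninv0 : (n : ℝ)⁻¹ ≠ 0 := inv_ne_zero hn0
  have hK0 : intVec k ≠ 0 := by
    intro h
    apply hk0
    funext i
    have := congrFun h i
    simpa [intVec] using this
  have hL0 : intVec l ≠ 0 := by
    intro h
    apply hl0
    funext i
    have := congrFun h i
    simpa [intVec] using this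
  -- key real identity
  have hKL : intVec k - intVec l = (n : ℝ) • intVec t := by
    funext i
    have := congrFun ht i
    simp only [Pi.sub_apply, Pi.smul_apply, smul_eq_mul] at this ⊢
    unfold intVec
    exact_mod_cast this
  have hT : intVec t = (n : ℝ)⁻¹ • (intVec k - intVec l) := by
    rw [hKL, smul_smul, inv_mul_cancel₀ hn0, one_smul]
  -- the point equality
  have hpt : p + (n : ℝ)⁻¹ • intVec k = (p + intVec t) + (n : ℝ)⁻¹ • intVec l := by
    rw [hT]
    module
  have hc1 : (0:ℝ) ≤ (n : ℝ)⁻¹ := by positivity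
  have hc2 : (n : ℝ)⁻¹ ≤ 1 := by
    rw [inv_le_one_iff₀]
    right
    exact_mod_cast Nat.one_le_of_lt hn
  refine ⟨?_, ?_, ?_, ?_, ?_, ?_, ?_⟩
  · -- segments distinct
    intro hseg
    have hp : p ∈ segment ℝ (p + intVec t) (p + intVec t + intVec l) := by
      rw [← hseg]; exact left_mem_segment ℝ _ _
    rw [segment_eq_image'] at hp
    obtain ⟨θ, ⟨h0θ, hθ1⟩, hθ⟩ := hp
    simp only [add_sub_cancel_left] at hθ
    -- p = p + intVec t + θ • intVec l
    have h1 : intVec t + θ • intVec l = 0 := by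
      have := hθ.symm
      rw [add_assoc] at this
      nth_rewrite 1 [← add_zero p] at this
      exact (add_right_injective p this).symm
    -- so intVec k = c • intVec l with c = 1 - n θ
    have h2 : intVec k = (1 - (n:ℝ) * θ) • intVec l := by
      have h3 : (n:ℝ) • (intVec t + θ • intVec l) = 0 := by rw [h1, smul_zero]
      rw [smul_add, ← hKL, smul_smul] at h3
      have : intVec k = intVec l - ((n:ℝ) * θ) • intVec l := by
        have := sub_eq_zero.2 (rfl : intVec l = intVec l)
        linear_combination (norm := module) h3
      rw [this]; module
    set c : ℝ := 1 - (n:ℝ) * θ with hc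
    obtain ⟨i, hi⟩ : ∃ i, l i ≠ 0 := by
      by_contra h
      push_neg at h
      exact hl0 (funext h)
    -- k j * l i = k i * l j for all j
    have hcross : ∀ j, (l i) * (k j) = (k i) * (l j) := by
      intro j
      have hj := congrFun h2 j
      have hi' := congrFun h2 i
      simp only [Pi.smul_apply, smul_eq_mul, intVec] at hj hi'
      have hli : (l i : ℝ) ≠ 0 := Int.cast_ne_zero.2 hi
      have : (l i : ℝ) * (k j : ℝ) = (k i : ℝ) * (l j : ℝ) := by
        rw [hj, hi']; ring
      exact_mod_cast this
    have hzero : (l i) • k + (-(k i)) • l = 0 := by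
      funext j
      simp only [Pi.add_apply, Pi.smul_apply, smul_eq_mul, Pi.zero_apply, neg_mul]
      have := hcross j
      linarith
    exact hi (hpair (l i) (-(k i)) hzero).1
  · exact ⟨1 - (n:ℝ)⁻¹, (n:ℝ)⁻¹, by linarith, hc1, by ring, by module⟩
  · rw [hpt]
    exact ⟨1 - (n:ℝ)⁻¹, (n:ℝ)⁻¹, by linarith, hc1, by ring, by module⟩
  · intro h
    have : (n : ℝ)⁻¹ • intVec k = 0 := by
      nth_rewrite 2 [← add_zero p] at h
      exact add_right_injective p h
    exact hK0 (by simpa [hninv0] using this)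
  · intro h
    have h' : (n : ℝ)⁻¹ • intVec k = intVec k := add_right_injective p h
    have : ((n : ℝ)⁻¹ - 1) • intVec k = 0 := by
      rw [sub_smul, one_smul, h', sub_self]
    have hne : (n : ℝ)⁻¹ - 1 ≠ 0 := by
      have : (n:ℝ)⁻¹ < 1 := by
        rw [inv_lt_one_iff₀]
        right
        exact_mod_cast hn
      linarith
    exact hK0 (by simpa [hne] using this)
  · intro h
    have h' : (n : ℝ)⁻¹ • intVec k = intVec t := add_right_injective p h
    rw [hT] at h'
    have h2 := sub_eq_zero.mpr h'.symm
    have h3 : (n : ℝ)⁻¹ • intVec l = 0 := by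
      linear_combination (norm := module) -h2
    exact hL0 (by simpa [hninv0] using h3)
  · intro h
    rw [hpt] at h
    have h' : (n : ℝ)⁻¹ • intVec l = intVec l :=
      add_right_injective _ h
    have : ((n : ℝ)⁻¹ - 1) • intVec l = 0 := by
      rw [sub_smul, one_smul, h', sub_self]
    have hne : (n : ℝ)⁻¹ - 1 ≠ 0 := by
      have : (n:ℝ)⁻¹ < 1 := by
        rw [inv_lt_one_iff₀]
        right
        exact_mod_cast hn
      linarith
    exact hL0 (by simpa [hne] using this)
end

section
/- Let p, q ∈ ℝ³ and k, l ∈ ℤ³, and suppose the three points p, q + k, q + l are affinely independent (in particular pairwise distinct and not collinear). Let n ≥ 2 be an integer and t ∈ ℤ³ with k − l = n·t. Then the closed segments [p, q + k] and [p + t, q + l + t] are distinct, and the point p + (1/n)(q + k − p) belongs to both segments but is an endpoint of neither. -/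
theorem stmt7 (p q : Fin 3 → ℝ) (k l : Fin 3 → ℤ)
    (hind : AffineIndependent ℝ ![p, q + intVec k, q + intVec l])
    (n : ℕ) (hn : 2 ≤ n) (t : Fin 3 → ℤ) (ht : k - l = (n : ℤ) • t) :
    segment ℝ p (q + intVec k) ≠
      segment ℝ (p + intVec t) (q + intVec l + intVec t) ∧
    p + (n : ℝ)⁻¹ • (q + intVec k - p) ∈ segment ℝ p (q + intVec k) ∧
    p + (n : ℝ)⁻¹ • (q + intVec k - p) ∈
      segment ℝ (p + intVec t) (q + intVec l + intVec t) ∧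
    p + (n : ℝ)⁻¹ • (q + intVec k - p) ≠ p ∧
    p + (n : ℝ)⁻¹ • (q + intVec k - p) ≠ q + intVec k ∧
    p + (n : ℝ)⁻¹ • (q + intVec k - p) ≠ p + intVec t ∧
    p + (n : ℝ)⁻¹ • (q + intVec k - p) ≠ q + intVec l + intVec t := by
  set b := q + intVec k with hb
  set c := q + intVec l with hc
  have hn1 : (1:ℝ) < (n:ℝ) := by exact_mod_cast (by omega : 1 < n)
  have hn0 : (0:ℝ) < (n:ℝ) := lt_trans one_pos hn1
  have hinv0 : (0:ℝ) < (n:ℝ)⁻¹ := inv_pos.mpr hn0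
  have hinv1 : (n:ℝ)⁻¹ < 1 := by
    rw [inv_lt_one_iff₀]; right; exact hn1
  -- the key algebraic relation
  have htc : b - c = (n:ℝ) • intVec t := by
    funext i
    have h := congrFun ht i
    simp only [Pi.sub_apply, Pi.smul_apply, smul_eq_mul] at h
    simp only [hb, hc, Pi.sub_apply, Pi.add_apply, Pi.smul_apply, intVec, smul_eq_mul]
    have : (k i : ℝ) - (l i : ℝ) = (n : ℝ) * (t i : ℝ) := by exact_mod_cast h
    linarith
  have key : (n:ℝ)⁻¹ • (b - p) = intVec t + (n:ℝ)⁻¹ • (c - p) := by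
    have hbp : b - p = (n:ℝ) • intVec t + (c - p) := by
      rw [← htc]; abel
    rw [hbp, smul_add, inv_smul_smul₀ (ne_of_gt hn0)]
  -- distinctness of the three points
  have hpb : p ≠ b := by
    have := hind.injective.ne (show (0 : Fin 3) ≠ 1 by decide)
    simpa using this
  have hpc : p ≠ c := by
    have := hind.injective.ne (show (0 : Fin 3) ≠ 2 by decide)
    simpa using this
  -- not collinear
  have hncol : ¬ Collinear ℝ ({p, b, c} : Set (Fin 3 → ℝ)) := by
    exact affineIndependent_iff_not_collinear_set.mp hind
  -- the second-segment expression of the common point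
  have hX2 : p + (n:ℝ)⁻¹ • (b - p)
      = (p + intVec t) + (n:ℝ)⁻¹ • ((c + intVec t) - (p + intVec t)) := by
    have : (c + intVec t) - (p + intVec t) = c - p := by abel
    rw [this, key]; abel
  refine ⟨?_, ?_, ?_, ?_, ?_, ?_, ?_⟩
  · -- segments are distinct
    intro hseg
    have h1 : p + intVec t ∈ segment ℝ p b := by
      rw [hseg]; exact left_mem_segment ℝ _ _
    have h2 : c + intVec t ∈ segment ℝ p b := by
      rw [hseg]; exact right_mem_segment ℝ _ _
    rw [segment_eq_image'] at h1 h2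
    obtain ⟨u, -, hu⟩ := h1
    obtain ⟨v, -, hv⟩ := h2
    apply hncol
    rw [collinear_iff_exists_forall_eq_smul_vadd]
    refine ⟨p, b - p, ?_⟩
    intro x hx
    rcases hx with rfl | rfl | rfl
    · exact ⟨0, by simp⟩
    · exact ⟨1, by simp⟩
    · refine ⟨v - u, ?_⟩
      have hc' : c + intVec t = p + v • (b - p) := hv.symm
      have hp' : p + intVec t = p + u • (b - p) := hu.symm
      have h3 : c = (v - u) • (b - p) + p := by
        have : (c + intVec t) - (p + intVec t) = (p + v • (b - p)) - (p + u • (b - p)) := by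
          rw [hc', hp']
        rw [sub_smul]
        have h4 : c - p = v • (b - p) - u • (b - p) := by
          calc c - p = (c + intVec t) - (p + intVec t) := by abel
            _ = (p + v • (b - p)) - (p + u • (b - p)) := this
            _ = v • (b - p) - u • (b - p) := by abel
        have := congrArg (· + p) h4
        simpa using this
      simpa using h3
  · rw [segment_eq_image']
    exact ⟨(n:ℝ)⁻¹, ⟨le_of_lt hinv0, le_of_lt hinv1⟩, rfl⟩
  · rw [segment_eq_image']
    exact ⟨(n:ℝ)⁻¹, ⟨le_of_lt hinv0, le_of_lt hinv1⟩, hX2.symm⟩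
  · intro h
    have : (n:ℝ)⁻¹ • (b - p) = 0 := by
      have := congrArg (· - p) h; simpa using this
    rcases smul_eq_zero.mp this with h' | h'
    · exact (ne_of_gt hinv0) h'
    · exact hpb (sub_eq_zero.mp h').symm
  · intro h
    have h1 : (n:ℝ)⁻¹ • (b - p) = b - p := by
      have := congrArg (· - p) h; simpa using this
    have h2 : ((n:ℝ)⁻¹ - 1) • (b - p) = 0 := by
      rw [sub_smul, one_smul, h1, sub_self]
    rcases smul_eq_zero.mp h2 with h' | h'
    · linarith [h']
    · exact hpb (sub_eq_zero.mp h').symm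
  · intro h
    rw [hX2] at h
    have : (n:ℝ)⁻¹ • ((c + intVec t) - (p + intVec t)) = 0 := by
      have := congrArg (· - (p + intVec t)) h; simpa using this
    have hcp : (c + intVec t) - (p + intVec t) = c - p := by abel
    rw [hcp] at this
    rcases smul_eq_zero.mp this with h' | h'
    · exact (ne_of_gt hinv0) h'
    · exact hpc (sub_eq_zero.mp h').symm
  · intro h
    rw [hX2] at h
    have hcp : (c + intVec t) - (p + intVec t) = c - p := by abel
    rw [hcp] at h
    have h1 : (n:ℝ)⁻¹ • (c - p) = c - p := by
      have h5 : (n:ℝ)⁻¹ • (c - p) = (c + intVec t) - (p + intVec t) := by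
        rw [← h]; abel
      rw [h5]; abel
    have h2 : ((n:ℝ)⁻¹ - 1) • (c - p) = 0 := by
      rw [sub_smul, one_smul, h1, sub_self]
    rcases smul_eq_zero.mp h2 with h' | h'
    · linarith [h']
    · exact hpc (sub_eq_zero.mp h').symm
end

section
/- Let n = p₁p₂p₃ with positive integers p₁, p₂, p₃, and let q₁, q₂, r₁ be integers with 0 ≤ q₁ < p₂, 0 ≤ q₂ < p₃ and 0 ≤ r₁ < p₃. Let L be the lower triangular 3×3 rational matrix with rows (p₁, 0, 0), (q₁, p₂, 0), (r₁, q₂, p₃). Then the additive subgroup M of ℚ³ generated by the rows of the inverse matrix L⁻¹ contains ℤ³, and the index of ℤ³ in M equals n. -/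
/-- Coordinates (or any additive invariant of the form "lies in a value subgroup")
propagate from generators to the closure. -/
lemma closure_coord_int {s : Set (Fin 3 → ℚ)} {i : Fin 3}
    (h : ∀ v ∈ s, ∃ m : ℤ, v i = m) :
    ∀ x ∈ AddSubgroup.closure s, ∃ m : ℤ, x i = m := by
  intro x hx
  induction hx using AddSubgroup.closure_induction with
  | mem v hv => exact h v hv
  | zero => exact ⟨0, by simp⟩
  | add x y hx hy ihx ihy =>
    obtain ⟨m, hm⟩ := ihx; obtain ⟨m', hm'⟩ := ihy
    exact ⟨m + m', by simp [hm, hm']⟩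
  | neg x hx ihx =>
    obtain ⟨m, hm⟩ := ihx
    exact ⟨-m, by simp [hm]⟩

lemma closure_sub_zsmul {G : Type*} [AddCommGroup G] {s : Set G} {H : AddSubgroup G} (u : G)
    (h : ∀ v ∈ s, ∃ k : ℤ, v - k • u ∈ H) :
    ∀ x ∈ AddSubgroup.closure s, ∃ k : ℤ, x - k • u ∈ H := by
  intro x hx
  induction hx using AddSubgroup.closure_induction with
  | mem v hv => exact h v hv
  | zero => exact ⟨0, by simpa using H.zero_mem⟩
  | add x y hx hy ihx ihy =>
    obtain ⟨k, hk⟩ := ihx; obtain ⟨k', hk'⟩ := ihy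
    refine ⟨k + k', ?_⟩
    have : x + y - (k + k') • u = (x - k • u) + (y - k' • u) := by
      rw [add_zsmul]; abel
    rw [this]; exact H.add_mem hk hk'
  | neg x hx ihx =>
    obtain ⟨k, hk⟩ := ihx
    refine ⟨-k, ?_⟩
    have : -x - (-k) • u = -(x - k • u) := by rw [neg_zsmul]; abel
    rw [this]; exact H.neg_mem hk


/-- If the quotient `K / H` is generated by the class of `u`, which has exact order `p`,
then the relative index of `H` in `K` is `p`. -/
lemma relindex_eq_of_cyclic {G : Type*} [AddCommGroup G] {H K : AddSubgroup G}
    (u : G) (hu : u ∈ K) (p : ℕ) (hp : 0 < p)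
    (hgen : ∀ x ∈ K, ∃ k : ℤ, x - k • u ∈ H)
    (hpu : (p : ℤ) • u ∈ H)
    (hmin : ∀ k : ℤ, k • u ∈ H → (p : ℤ) ∣ k) :
    H.relIndex K = p := by
  set H' := H.addSubgroupOf K with hH'
  have key : ∀ k : ℤ, (k • (⟨u, hu⟩ : K) : K ⧸ H') = 0 ↔ k • u ∈ H := by
    intro k
    rw [← QuotientAddGroup.mk_zsmul, QuotientAddGroup.eq_zero_iff]
    simp [hH', AddSubgroup.mem_addSubgroupOf]
  set ub : K ⧸ H' := ((⟨u, hu⟩ : K) : K ⧸ H') with hub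
  have hord : addOrderOf ub = p := by
    rw [addOrderOf_eq_iff hp]
    constructor
    · have := (key (p : ℤ)).2 hpu
      simpa [hub, natCast_zsmul] using this
    · intro m hmp hm0 hcon
      have : ((m : ℤ) • (⟨u, hu⟩ : K) : K ⧸ H') = 0 := by
        simpa [hub, natCast_zsmul] using hcon
      obtain ⟨c, hc⟩ := hmin m ((key m).1 this)
      have : (p : ℤ) ≤ m := Int.le_of_dvd (by exact_mod_cast hm0) ⟨c, hc⟩
      omega
  have htop : AddSubgroup.zmultiples ub = ⊤ := by
    rw [AddSubgroup.eq_top_iff']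
    intro q
    induction q using QuotientAddGroup.induction_on with
    | H x =>
      obtain ⟨k, hk⟩ := hgen x.1 x.2
      rw [AddSubgroup.mem_zmultiples_iff]
      refine ⟨k, ?_⟩
      rw [hub, ← QuotientAddGroup.mk_zsmul, QuotientAddGroup.eq]
      simpa [hH', AddSubgroup.mem_addSubgroupOf, neg_add_eq_sub] using hk
  have h1 : H.relIndex K = Nat.card (K ⧸ H') := AddSubgroup.index_eq_card _
  have h2 : Nat.card (K ⧸ H') = Nat.card (⊤ : AddSubgroup (K ⧸ H')) :=
    (Nat.card_congr AddSubgroup.topEquiv.toEquiv).symm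
  rw [h1, h2, ← htop, Nat.card_zmultiples, hord]

/-- The lattice `ℤ³` viewed as an additive subgroup of `ℚ³`. -/
def intLattice : AddSubgroup (Fin 3 → ℚ) :=
  AddSubgroup.closure (Set.range fun m : Fin 3 → ℤ => fun i => (m i : ℚ))

theorem stmt8 (p₁ p₂ p₃ : ℕ) (hp₁ : 0 < p₁) (hp₂ : 0 < p₂) (hp₃ : 0 < p₃)
    (q₁ q₂ r₁ : ℤ)
    (hq₁ : 0 ≤ q₁ ∧ q₁ < (p₂ : ℤ)) (hq₂ : 0 ≤ q₂ ∧ q₂ < (p₃ : ℤ))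
    (hr₁ : 0 ≤ r₁ ∧ r₁ < (p₃ : ℤ))
    (L : Matrix (Fin 3) (Fin 3) ℚ)
    (hL : L = !![(p₁ : ℚ), 0, 0; (q₁ : ℚ), (p₂ : ℚ), 0; (r₁ : ℚ), (q₂ : ℚ), (p₃ : ℚ)])
    (M : AddSubgroup (Fin 3 → ℚ))
    (hM : M = AddSubgroup.closure (Set.range fun i => fun j => L⁻¹ i j)) :
    intLattice ≤ M ∧ AddSubgroup.relIndex intLattice M = p₁ * p₂ * p₃ := by
  have hP1 : (p₁ : ℚ) ≠ 0 := Nat.cast_ne_zero.2 hp₁.ne'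
  have hP2 : (p₂ : ℚ) ≠ 0 := Nat.cast_ne_zero.2 hp₂.ne'
  have hP3 : (p₃ : ℚ) ≠ 0 := Nat.cast_ne_zero.2 hp₃.ne'
  set u₀ : Fin 3 → ℚ := ![1 / p₁, 0, 0] with hu₀
  set u₁ : Fin 3 → ℚ := ![-(q₁ : ℚ) / (p₁ * p₂), 1 / p₂, 0] with hu₁
  set u₂ : Fin 3 → ℚ :=
    ![((q₁ : ℚ) * q₂ - r₁ * p₂) / (p₁ * p₂ * p₃), -(q₂ : ℚ) / (p₂ * p₃), 1 / p₃] with hu₂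
  set e₀ : Fin 3 → ℚ := ![1, 0, 0] with he₀
  set e₁ : Fin 3 → ℚ := ![0, 1, 0] with he₁
  set e₂ : Fin 3 → ℚ := ![0, 0, 1] with he₂
  have hLinv : L⁻¹ = Matrix.of ![u₀, u₁, u₂] := by
    apply Matrix.inv_eq_right_inv
    subst hL
    ext i j
    fin_cases i <;> fin_cases j <;>
      simp [Matrix.mul_apply, Fin.sum_univ_three, hu₀, hu₁, hu₂] <;>
      field_simp <;> ring
  have hMeq : M = AddSubgroup.closure {u₀, u₁, u₂} := by
    rw [hM]
    congr 1
    ext x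
    constructor
    · rintro ⟨i, rfl⟩
      fin_cases i <;> simp [hLinv]
    · rintro (rfl | rfl | rfl)
      · exact ⟨0, by simp [hLinv]⟩
      · exact ⟨1, by simp [hLinv]⟩
      · exact ⟨2, by simp [hLinv]⟩
  -- basic memberships in the integer lattice
  have hIntMem : ∀ m : Fin 3 → ℤ, (fun i => (m i : ℚ)) ∈ intLattice :=
    fun m => AddSubgroup.subset_closure ⟨m, rfl⟩
  have he₀I : e₀ ∈ intLattice := by
    have h := hIntMem ![1, 0, 0]
    have : (fun i => ((![1, 0, 0] : Fin 3 → ℤ) i : ℚ)) = e₀ := by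
      funext i; fin_cases i <;> simp [he₀]
    rwa [this] at h
  have he₁I : e₁ ∈ intLattice := by
    have h := hIntMem ![0, 1, 0]
    have : (fun i => ((![0, 1, 0] : Fin 3 → ℤ) i : ℚ)) = e₁ := by
      funext i; fin_cases i <;> simp [he₁]
    rwa [this] at h
  have he₂I : e₂ ∈ intLattice := by
    have h := hIntMem ![0, 0, 1]
    have : (fun i => ((![0, 0, 1] : Fin 3 → ℤ) i : ℚ)) = e₂ := by
      funext i; fin_cases i <;> simp [he₂]
    rwa [this] at h
  -- the rows of L expressed via the u's
  have id0 : (p₁ : ℤ) • u₀ = e₀ := by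
    funext i; fin_cases i <;> simp [hu₀, he₀] <;> field_simp
  have id1 : q₁ • u₀ + (p₂ : ℤ) • u₁ = e₁ := by
    funext i; fin_cases i <;> simp [hu₀, hu₁, he₁] <;> field_simp <;> ring
  have id2 : r₁ • u₀ + q₂ • u₁ + (p₃ : ℤ) • u₂ = e₂ := by
    funext i; fin_cases i <;> simp [hu₀, hu₁, hu₂, he₂] <;> field_simp <;> ring
  -- intermediate lattices
  set M₁ := AddSubgroup.closure {u₀, e₁, e₂} with hM₁
  set M₂ := AddSubgroup.closure {u₀, u₁, e₂} with hM₂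
  have hu₀M₁ : u₀ ∈ M₁ := AddSubgroup.subset_closure (by simp)
  have he₁M₁ : e₁ ∈ M₁ := AddSubgroup.subset_closure (by simp)
  have he₂M₁ : e₂ ∈ M₁ := AddSubgroup.subset_closure (by simp)
  have hu₀M₂ : u₀ ∈ M₂ := AddSubgroup.subset_closure (by simp)
  have hu₁M₂ : u₁ ∈ M₂ := AddSubgroup.subset_closure (by simp)
  have he₂M₂ : e₂ ∈ M₂ := AddSubgroup.subset_closure (by simp)
  have hu₀M : u₀ ∈ M := by rw [hMeq]; exact AddSubgroup.subset_closure (by simp)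
  have hu₁M : u₁ ∈ M := by rw [hMeq]; exact AddSubgroup.subset_closure (by simp)
  have hu₂M : u₂ ∈ M := by rw [hMeq]; exact AddSubgroup.subset_closure (by simp)
  have he₀M₁ : e₀ ∈ M₁ := by rw [← id0]; exact AddSubgroup.zsmul_mem _ hu₀M₁ _
  have he₁M₂ : e₁ ∈ M₂ := by
    rw [← id1]
    exact add_mem (AddSubgroup.zsmul_mem _ hu₀M₂ _) (AddSubgroup.zsmul_mem _ hu₁M₂ _)
  have he₂M : e₂ ∈ M := by
    rw [← id2]
    exact add_mem (add_mem (AddSubgroup.zsmul_mem _ hu₀M _) (AddSubgroup.zsmul_mem _ hu₁M _))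
      (AddSubgroup.zsmul_mem _ hu₂M _)
  -- inclusions
  have incl0 : intLattice ≤ M₁ := by
    rw [intLattice]
    refine (AddSubgroup.closure_le _).2 ?_
    rintro x ⟨m, rfl⟩
    have hx : (fun i => (m i : ℚ)) = m 0 • e₀ + m 1 • e₁ + m 2 • e₂ := by
      funext i; fin_cases i <;> simp [he₀, he₁, he₂]
    show (fun i => (m i : ℚ)) ∈ M₁
    rw [hx]
    exact add_mem (add_mem (AddSubgroup.zsmul_mem _ he₀M₁ _) (AddSubgroup.zsmul_mem _ he₁M₁ _))
      (AddSubgroup.zsmul_mem _ he₂M₁ _)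
  have incl1 : M₁ ≤ M₂ := by
    rw [hM₁]
    refine (AddSubgroup.closure_le _).2 ?_
    rintro x (rfl | rfl | rfl)
    · exact hu₀M₂
    · exact he₁M₂
    · exact he₂M₂
  have incl2 : M₂ ≤ M := by
    rw [hM₂]
    refine (AddSubgroup.closure_le _).2 ?_
    rintro x (rfl | rfl | rfl)
    · exact hu₀M
    · exact hu₁M
    · exact he₂M
  -- coordinate invariants
  have hcoord0 : ∀ x ∈ intLattice, ∃ m : ℤ, x 0 = m :=
    closure_coord_int (by rintro v ⟨m, rfl⟩; exact ⟨m 0, rfl⟩)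
  have hcoord1 : ∀ x ∈ M₁, ∃ m : ℤ, x 1 = m := by
    rw [hM₁]
    refine closure_coord_int ?_
    rintro v (rfl | rfl | rfl)
    · exact ⟨0, by simp [hu₀]⟩
    · exact ⟨1, by simp [he₁]⟩
    · exact ⟨0, by simp [he₂]⟩
  have hcoord2 : ∀ x ∈ M₂, ∃ m : ℤ, x 2 = m := by
    rw [hM₂]
    refine closure_coord_int ?_
    rintro v (rfl | rfl | rfl)
    · exact ⟨0, by simp [hu₀]⟩
    · exact ⟨0, by simp [hu₁]⟩
    · exact ⟨1, by simp [he₂]⟩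
  -- the three index computations
  have r1 : intLattice.relIndex M₁ = p₁ := by
    refine relindex_eq_of_cyclic u₀ hu₀M₁ p₁ hp₁ ?_ ?_ ?_
    · rw [hM₁]
      refine closure_sub_zsmul u₀ ?_
      rintro v (rfl | rfl | rfl)
      · exact ⟨1, by simpa using intLattice.zero_mem⟩
      · exact ⟨0, by simpa using he₁I⟩
      · exact ⟨0, by simpa using he₂I⟩
    · rw [id0]; exact he₀I
    · intro k hk
      obtain ⟨m, hm⟩ := hcoord0 _ hk
      simp only [Pi.smul_apply, hu₀, Matrix.cons_val_zero, zsmul_eq_mul] at hm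
      have hq : (k : ℚ) = (p₁ * m : ℤ) := by push_cast; field_simp at hm; linarith
      exact ⟨m, by exact_mod_cast hq⟩
  have r2 : M₁.relIndex M₂ = p₂ := by
    refine relindex_eq_of_cyclic u₁ hu₁M₂ p₂ hp₂ ?_ ?_ ?_
    · rw [hM₂]
      refine closure_sub_zsmul u₁ ?_
      rintro v (rfl | rfl | rfl)
      · exact ⟨0, by simpa using hu₀M₁⟩
      · exact ⟨1, by simpa using M₁.zero_mem⟩
      · exact ⟨0, by simpa using he₂M₁⟩
    · have : (p₂ : ℤ) • u₁ = e₁ + (-q₁) • u₀ := by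
        rw [← id1]; rw [neg_zsmul]; abel
      rw [this]
      exact add_mem he₁M₁ (AddSubgroup.zsmul_mem _ hu₀M₁ _)
    · intro k hk
      obtain ⟨m, hm⟩ := hcoord1 _ hk
      simp only [Pi.smul_apply, hu₁, Matrix.cons_val_one, Matrix.head_cons, Matrix.cons_val_zero, zsmul_eq_mul] at hm
      have hq : (k : ℚ) = (p₂ * m : ℤ) := by push_cast; field_simp at hm; linarith
      exact ⟨m, by exact_mod_cast hq⟩
  have r3 : M₂.relIndex M = p₃ := by
    refine relindex_eq_of_cyclic u₂ hu₂M p₃ hp₃ ?_ ?_ ?_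
    · rw [hMeq]
      refine closure_sub_zsmul u₂ ?_
      rintro v (rfl | rfl | rfl)
      · exact ⟨0, by simpa using hu₀M₂⟩
      · exact ⟨0, by simpa using hu₁M₂⟩
      · exact ⟨1, by simpa using M₂.zero_mem⟩
    · have : (p₃ : ℤ) • u₂ = e₂ + (-r₁) • u₀ + (-q₂) • u₁ := by
        rw [← id2]; rw [neg_zsmul, neg_zsmul]; abel
      rw [this]
      exact add_mem (add_mem he₂M₂ (AddSubgroup.zsmul_mem _ hu₀M₂ _))
        (AddSubgroup.zsmul_mem _ hu₁M₂ _)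
    · intro k hk
      obtain ⟨m, hm⟩ := hcoord2 _ hk
      simp only [Pi.smul_apply, hu₂, Matrix.cons_val_two, Matrix.tail_cons, Matrix.head_cons,
        zsmul_eq_mul] at hm
      have hq : (k : ℚ) = (p₃ * m : ℤ) := by push_cast; field_simp at hm; linarith
      exact ⟨m, by exact_mod_cast hq⟩
  refine ⟨incl0.trans (incl1.trans incl2), ?_⟩
  rw [← AddSubgroup.relIndex_mul_relIndex intLattice M₂ M (incl0.trans incl1) incl2,
    ← AddSubgroup.relIndex_mul_relIndex intLattice M₁ M₂ incl0 incl1, r1, r2, r3]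
end

section
/- Let n be a positive integer and let M be an additive subgroup of ℚ³ with ℤ³ ⊆ M and index [M : ℤ³] = n. Then there exist positive integers p₁, p₂, p₃ with n = p₁p₂p₃ and integers q₁, q₂, r₁ with 0 ≤ q₁ < p₂, 0 ≤ q₂ < p₃ and 0 ≤ r₁ < p₃, such that M is generated as an additive group by the rows of the inverse L⁻¹ of the lower triangular matrix L with rows (p₁, 0, 0), (q₁, p₂, 0), (r₁, q₂, p₃). -/
def intSet : AddSubgroup (Fin 3 → ℚ) where
  carrier := {x | ∀ i, ∃ k : ℤ, x i = (k : ℚ)}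
  zero_mem' := fun i => ⟨0, by simp⟩
  add_mem' := by
    rintro a b ha hb i
    obtain ⟨k, hk⟩ := ha i; obtain ⟨l, hl⟩ := hb i
    exact ⟨k + l, by simp [hk, hl]⟩
  neg_mem' := by
    rintro a ha i
    obtain ⟨k, hk⟩ := ha i
    exact ⟨-k, by simp [hk]⟩

lemma intLattice_eq : intLattice = intSet := by
  apply le_antisymm
  · rw [intLattice, AddSubgroup.closure_le]
    rintro x ⟨m, rfl⟩ i
    exact ⟨m i, rfl⟩
  · intro x hx
    have : x = fun i => ((Classical.choose (hx i) : ℤ) : ℚ) := by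
      funext i; exact Classical.choose_spec (hx i)
    rw [this]
    exact AddSubgroup.subset_closure ⟨_, rfl⟩

lemma mem_intLattice {x : Fin 3 → ℚ} : x ∈ intLattice ↔ ∀ i, ∃ k : ℤ, x i = (k : ℚ) := by
  rw [intLattice_eq]; rfl

lemma rat_subgroup_struct (A : AddSubgroup ℚ) (n : ℕ) (hn : 0 < n) (h1 : (1:ℚ) ∈ A)
    (hb : ∀ x ∈ A, ∃ k : ℤ, x = (k : ℚ) / n) :
    ∃ p : ℕ, 0 < p ∧ ∀ x : ℚ, x ∈ A ↔ ∃ k : ℤ, x = (k : ℚ) / p := by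
  have hn' : (n : ℚ) ≠ 0 := Nat.cast_ne_zero.mpr hn.ne'
  set f : ℤ →+ ℚ := {
    toFun := fun k => (k : ℚ) / n
    map_zero' := by simp
    map_add' := by intro a b; push_cast; ring }
  set S : AddSubgroup ℤ := A.comap f with hS
  obtain ⟨d, hd⟩ := Int.subgroup_cyclic S
  have hnS : (n : ℤ) ∈ S := by
    simp only [hS, AddSubgroup.mem_comap]
    show ((n : ℤ) : ℚ) / n ∈ A
    rw [show ((n:ℤ):ℚ)/n = 1 by rw [Int.cast_natCast]; exact div_self hn']
    exact h1
  have hmemS : ∀ k : ℤ, k ∈ S ↔ d ∣ k := by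
    intro k
    rw [hd, AddSubgroup.mem_closure_singleton]
    constructor
    · rintro ⟨m, rfl⟩; exact ⟨m, by rw [mul_comm]; simp [smul_eq_mul]⟩
    · rintro ⟨m, rfl⟩; exact ⟨m, by rw [smul_eq_mul, mul_comm]⟩
  have hmemS' : ∀ k : ℤ, k ∈ S ↔ ((d.natAbs : ℤ)) ∣ k := fun k =>
    (hmemS k).trans (Int.natAbs_dvd).symm
  have hdn : ((d.natAbs:ℤ)) ∣ (n : ℤ) := (hmemS' _).mp hnS
  have hd0 : d ≠ 0 := by
    rintro rfl; simp at hdn; omega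
  have hdnat : d.natAbs ∣ n := Int.ofNat_dvd.mp (by exact_mod_cast hdn)
  refine ⟨n / d.natAbs, Nat.div_pos (Nat.le_of_dvd hn hdnat) (Int.natAbs_pos.mpr hd0), ?_⟩
  have hkey : (n : ℚ) = (n / d.natAbs : ℕ) * d.natAbs := by
    rw [← Nat.cast_mul, Nat.div_mul_cancel hdnat]
  have hp0 : ((n / d.natAbs : ℕ) : ℚ) ≠ 0 := by
    have := Nat.div_pos (Nat.le_of_dvd hn hdnat) (Int.natAbs_pos.mpr hd0)
    exact Nat.cast_ne_zero.mpr this.ne'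
  have habs : ((d.natAbs : ℚ)) ≠ 0 := Nat.cast_ne_zero.mpr (Int.natAbs_pos.mpr hd0).ne'
  intro x
  constructor
  · intro hx
    obtain ⟨k, rfl⟩ := hb x hx
    have hkS : k ∈ S := by
      simp only [hS, AddSubgroup.mem_comap]; exact hx
    obtain ⟨m, rfl⟩ := (hmemS' k).mp hkS
    refine ⟨m, ?_⟩
    push_cast [hkey]
    field_simp
    rw [Nat.cast_natAbs, Int.cast_abs]
    ring
  · rintro ⟨k, rfl⟩
    have heq : (k : ℚ) / (n / d.natAbs : ℕ) = ((k * d.natAbs : ℤ) : ℚ) / n := by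
      push_cast [hkey]
      field_simp
      rw [Nat.cast_natAbs, Int.cast_abs]
    rw [heq]
    exact (hmemS' _).mpr ⟨k, mul_comm _ _⟩

lemma vec_ext {x y : Fin 3 → ℚ} (h0 : x 0 = y 0) (h1 : x 1 = y 1) (h2 : x 2 = y 2) :
    x = y := by
  funext i; fin_cases i <;> assumption

lemma dvd_small {p d : ℤ} (h : p ∣ d) (h2 : -p < d) (h3 : d < p) : d = 0 := by
  rcases h with ⟨m, rfl⟩
  rcases lt_trichotomy m 0 with hm | hm | hm
  · nlinarith
  · simp [hm]
  · nlinarith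

lemma vec_at0 (a b c : ℚ) : ![a,b,c] 0 = a := rfl
lemma vec_at1 (a b c : ℚ) : ![a,b,c] 1 = b := rfl
lemma vec_at2 (a b c : ℚ) : ![a,b,c] 2 = c := rfl

lemma add_zsmul_apply (x y : Fin 3 → ℚ) (c : ℤ) (i : Fin 3) :
    (x + c • y) i = x i + c * y i := by simp

lemma neg_add_apply (x y : Fin 3 → ℚ) (i : Fin 3) : (-x + y) i = y i - x i := by
  simp [sub_eq_neg_add]

lemma sub_zsmul_apply (x y : Fin 3 → ℚ) (c : ℤ) (i : Fin 3) :
    (x - c • y) i = x i - c * y i := by simp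

lemma triple_apply (a b c : ℤ) (x y z : Fin 3 → ℚ) (i : Fin 3) :
    (a • x + b • y + c • z) i = a * x i + b * y i + c * z i := by simp

lemma zsmul_sub_add_apply (c d : ℤ) (x y z : Fin 3 → ℚ) (i : Fin 3) :
    (c • x - y + d • z) i = c * x i - y i + d * z i := by simp

def sub2 (M : AddSubgroup (Fin 3 → ℚ)) : AddSubgroup (Fin 3 → ℚ) where
  carrier := {x | x ∈ M ∧ x 2 = 0}
  zero_mem' := ⟨zero_mem M, rfl⟩
  add_mem' := fun ha hb => ⟨add_mem ha.1 hb.1, by simp [ha.2, hb.2]⟩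
  neg_mem' := fun ha => ⟨neg_mem ha.1, by simp [ha.2]⟩

lemma mem_sub2 {M : AddSubgroup (Fin 3 → ℚ)} {x} : x ∈ sub2 M ↔ x ∈ M ∧ x 2 = 0 := Iff.rfl

def sub1 (M : AddSubgroup (Fin 3 → ℚ)) : AddSubgroup (Fin 3 → ℚ) where
  carrier := {x | x ∈ M ∧ x 1 = 0 ∧ x 2 = 0}
  zero_mem' := ⟨zero_mem M, rfl, rfl⟩
  add_mem' := fun ha hb => ⟨add_mem ha.1 hb.1, by simp [ha.2.1, hb.2.1], by simp [ha.2.2, hb.2.2]⟩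
  neg_mem' := fun ha => ⟨neg_mem ha.1, by simp [ha.2.1], by simp [ha.2.2]⟩

lemma mem_sub1 {M : AddSubgroup (Fin 3 → ℚ)} {x} :
    x ∈ sub1 M ↔ x ∈ M ∧ x 1 = 0 ∧ x 2 = 0 := Iff.rfl

set_option maxHeartbeats 3000000 in
theorem stmt9 (n : ℕ) (hn : 0 < n) (M : AddSubgroup (Fin 3 → ℚ))
    (hle : intLattice ≤ M) (hidx : AddSubgroup.relIndex intLattice M = n) :
    ∃ p₁ p₂ p₃ : ℕ, 0 < p₁ ∧ 0 < p₂ ∧ 0 < p₃ ∧ n = p₁ * p₂ * p₃ ∧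
      ∃ q₁ q₂ r₁ : ℤ,
        (0 ≤ q₁ ∧ q₁ < (p₂ : ℤ)) ∧ (0 ≤ q₂ ∧ q₂ < (p₃ : ℤ)) ∧ (0 ≤ r₁ ∧ r₁ < (p₃ : ℤ)) ∧
        M = AddSubgroup.closure (Set.range fun i => fun j =>
          (!![(p₁ : ℚ), 0, 0; (q₁ : ℚ), (p₂ : ℚ), 0; (r₁ : ℚ), (q₂ : ℚ), (p₃ : ℚ)])⁻¹ i j) := by
  classical
  have hnQ : (n : ℚ) ≠ 0 := Nat.cast_ne_zero.mpr hn.ne'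
  -- every element of M has all coordinates of the form k/n
  have hden : ∀ x ∈ M, ∀ i, ∃ k : ℤ, x i = (k : ℚ) / n := by
    intro x hx i
    have h1 : n • (⟨x, hx⟩ : M) ∈ intLattice.addSubgroupOf M := by
      have := AddSubgroup.nsmul_index_mem (intLattice.addSubgroupOf M) (⟨x, hx⟩ : M)
      rwa [show (intLattice.addSubgroupOf M).index = n from hidx] at this
    have h2 : n • x ∈ intLattice := by
      have := AddSubgroup.mem_addSubgroupOf.mp h1
      simpa using this
    obtain ⟨k, hk⟩ := mem_intLattice.mp h2 i
    refine ⟨k, ?_⟩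
    have : (n : ℚ) * x i = k := by
      simpa using hk
    field_simp [← this]
    linarith
  -- standard basis vectors
  have hE0 : (![1,0,0] : Fin 3 → ℚ) ∈ M := hle (mem_intLattice.mpr (by
    intro i; fin_cases i
    exacts [⟨1, by norm_num⟩, ⟨0, by norm_num⟩, ⟨0, by norm_num⟩]))
  have hE1 : (![0,1,0] : Fin 3 → ℚ) ∈ M := hle (mem_intLattice.mpr (by
    intro i; fin_cases i
    exacts [⟨0, by norm_num⟩, ⟨1, by norm_num⟩, ⟨0, by norm_num⟩]))
  have hE2 : (![0,0,1] : Fin 3 → ℚ) ∈ M := hle (mem_intLattice.mpr (by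
    intro i; fin_cases i
    exacts [⟨0, by norm_num⟩, ⟨0, by norm_num⟩, ⟨1, by norm_num⟩]))
  -- the three coordinate subgroups
  obtain ⟨p₃, hp₃, hA₃⟩ := rat_subgroup_struct
    (AddSubgroup.map (Pi.evalAddMonoidHom (fun _ => ℚ) 2) M) n hn
    ⟨![0,0,1], hE2, rfl⟩
    (by rintro x ⟨y, hy, rfl⟩; exact hden y hy 2)
  obtain ⟨p₂, hp₂, hA₂⟩ := rat_subgroup_struct
    (AddSubgroup.map (Pi.evalAddMonoidHom (fun _ => ℚ) 1) (sub2 M)) n hn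
    ⟨![0,1,0], mem_sub2.mpr ⟨hE1, rfl⟩, by norm_num⟩
    (by rintro x ⟨y, hy, rfl⟩; exact hden y (mem_sub2.mp hy).1 1)
  obtain ⟨p₁, hp₁, hA₁⟩ := rat_subgroup_struct
    (AddSubgroup.map (Pi.evalAddMonoidHom (fun _ => ℚ) 0) (sub1 M)) n hn
    ⟨![1,0,0], mem_sub1.mpr ⟨hE0, rfl, rfl⟩, by norm_num⟩
    (by rintro x ⟨y, hy, rfl⟩; exact hden y (mem_sub1.mp hy).1 0)
  have hp₁Q : (p₁ : ℚ) ≠ 0 := Nat.cast_ne_zero.mpr hp₁.ne'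
  have hp₂Q : (p₂ : ℚ) ≠ 0 := Nat.cast_ne_zero.mpr hp₂.ne'
  have hp₃Q : (p₃ : ℚ) ≠ 0 := Nat.cast_ne_zero.mpr hp₃.ne'
  -- ambient membership helpers
  have memA₃ : ∀ x ∈ M, ∃ k : ℤ, x 2 = (k : ℚ) / p₃ := by
    intro x hx
    exact (hA₃ (x 2)).mp ⟨x, hx, rfl⟩
  have memA₂ : ∀ x ∈ sub2 M, ∃ k : ℤ, x 1 = (k : ℚ) / p₂ := by
    intro x hx
    exact (hA₂ (x 1)).mp ⟨x, hx, rfl⟩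
  have memA₁ : ∀ x ∈ sub1 M, ∃ k : ℤ, x 0 = (k : ℚ) / p₁ := by
    intro x hx
    exact (hA₁ (x 0)).mp ⟨x, hx, rfl⟩
  -- pick staircase vectors
  obtain ⟨v₁, hv₁M, hv₁0⟩ : ∃ v₁, v₁ ∈ sub1 M ∧ v₁ 0 = (1 : ℚ) / p₁ := by
    obtain ⟨y, hy, hy0⟩ := (hA₁ ((1 : ℚ)/p₁)).mpr ⟨1, by norm_num⟩
    exact ⟨y, hy, hy0⟩
  obtain ⟨v₂, hv₂M, hv₂1⟩ : ∃ v₂, v₂ ∈ sub2 M ∧ v₂ 1 = (1 : ℚ) / p₂ := by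
    obtain ⟨y, hy, hy0⟩ := (hA₂ ((1 : ℚ)/p₂)).mpr ⟨1, by norm_num⟩
    exact ⟨y, hy, hy0⟩
  obtain ⟨v₃, hv₃M, hv₃2⟩ : ∃ v₃, v₃ ∈ M ∧ v₃ 2 = (1 : ℚ) / p₃ := by
    obtain ⟨y, hy, hy0⟩ := (hA₃ ((1 : ℚ)/p₃)).mpr ⟨1, by norm_num⟩
    exact ⟨y, hy, hy0⟩
  -- w₁
  set w₁ : Fin 3 → ℚ := ![(1 : ℚ)/p₁, 0, 0] with hw₁def
  have hw₁v : w₁ = v₁ := vec_ext (by simp [hw₁def, hv₁0]) (by simp [hw₁def, (mem_sub1.mp hv₁M).2.1]) (by simp [hw₁def, (mem_sub1.mp hv₁M).2.2])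
  have hw₁M : w₁ ∈ M := hw₁v ▸ (mem_sub1.mp hv₁M).1
  -- reduction producing w₂
  have hv₂2 : v₂ 2 = 0 := (mem_sub2.mp hv₂M).2
  obtain ⟨k₂, hk₂⟩ : ∃ k : ℤ, v₂ 0 = (k : ℚ) / (p₁ * p₂) := by
    have ht : ((p₂ : ℤ) • v₂ - ![0,1,0]) ∈ sub1 M := by
      refine mem_sub1.mpr ⟨sub_mem (zsmul_mem (mem_sub2.mp hv₂M).1 _) hE1, ?_, ?_⟩
      · simp [hv₂1]
        field_simp
        simp
      · simp [hv₂2]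
    obtain ⟨k, hk⟩ := memA₁ _ ht
    refine ⟨k, ?_⟩
    have hq : (p₂ : ℚ) * v₂ 0 - 0 = k / p₁ := by simpa using hk
    field_simp at hq ⊢
    linarith
  set q₁ : ℤ := (-k₂) % p₂ with hq₁def
  set s₂ : ℤ := (-k₂) / p₂ with hs₂def
  have hq₁b : 0 ≤ q₁ ∧ q₁ < (p₂ : ℤ) := ⟨Int.emod_nonneg _ (by exact_mod_cast hp₂.ne'),
    Int.emod_lt_of_pos _ (by exact_mod_cast hp₂)⟩
  have hk₂s : k₂ + s₂ * (p₂ : ℤ) = -q₁ := by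
    have := Int.mul_ediv_add_emod (-k₂) (p₂ : ℤ)
    rw [mul_comm] at this
    simp only [hq₁def, hs₂def]
    omega
  set w₂ : Fin 3 → ℚ := ![-(q₁ : ℚ)/(p₁ * p₂), (1 : ℚ)/p₂, 0] with hw₂def
  have hw₂v : w₂ = v₂ + s₂ • w₁ := by
    refine vec_ext ?_ ?_ ?_
    · have hQ : (k₂ : ℚ) = -(q₁ : ℚ) - (s₂ : ℚ) * p₂ := by
        exact_mod_cast congrArg (Int.cast : ℤ → ℚ) (by linarith [hk₂s] : k₂ = -q₁ - s₂ * p₂)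
      have e1 : (v₂ + s₂ • w₁) 0 = v₂ 0 + (s₂ : ℚ) * w₁ 0 := add_zsmul_apply v₂ w₁ s₂ 0
      rw [hw₂def, vec_at0, e1, hk₂, hw₁def, vec_at0, hQ]
      field_simp
      ring
    · have e1 : (v₂ + s₂ • w₁) 1 = v₂ 1 + (s₂ : ℚ) * w₁ 1 := add_zsmul_apply v₂ w₁ s₂ 1
      rw [hw₂def, vec_at1, e1, hv₂1, hw₁def, vec_at1]
      ring
    · have e1 : (v₂ + s₂ • w₁) 2 = v₂ 2 + (s₂ : ℚ) * w₁ 2 := add_zsmul_apply v₂ w₁ s₂ 2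
      rw [hw₂def, vec_at2, e1, hv₂2, hw₁def, vec_at2]
      ring
  have hw₂M : w₂ ∈ M := hw₂v ▸ add_mem (mem_sub2.mp hv₂M).1 (zsmul_mem hw₁M _)
  have hw₂1 : w₂ 1 = (1 : ℚ)/p₂ := by rw [hw₂def, vec_at1]
  have hw₂2 : w₂ 2 = 0 := by rw [hw₂def, vec_at2]
  have hw₂0 : w₂ 0 = -(q₁ : ℚ)/(p₁ * p₂) := by rw [hw₂def, vec_at0]
  -- reduction producing w₃ : first reduce the middle entry
  obtain ⟨m₃, hm₃⟩ : ∃ m : ℤ, v₃ 1 = (m : ℚ) / (p₂ * p₃) := by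
    have ht : ((p₃ : ℤ) • v₃ - ![0,0,1]) ∈ sub2 M := by
      refine mem_sub2.mpr ⟨sub_mem (zsmul_mem hv₃M _) hE2, ?_⟩
      have h2 : (((p₃ : ℤ) • v₃ - ![0,0,1] : Fin 3 → ℚ)) 2 = (p₃ : ℚ) * v₃ 2 - 1 := by simp
      rw [h2, hv₃2]
      field_simp
      simp
    obtain ⟨k, hk⟩ := memA₂ _ ht
    have h1 : (((p₃ : ℤ) • v₃ - ![0,0,1] : Fin 3 → ℚ)) 1 = (p₃ : ℚ) * v₃ 1 - 0 := by simp
    rw [h1] at hk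
    refine ⟨k, ?_⟩
    field_simp at hk ⊢
    linear_combination hk
  set q₂ : ℤ := (-m₃) % p₃ with hq₂def
  set s₃ : ℤ := (-m₃) / p₃ with hs₃def
  have hq₂b : 0 ≤ q₂ ∧ q₂ < (p₃ : ℤ) := ⟨Int.emod_nonneg _ (by exact_mod_cast hp₃.ne'),
    Int.emod_lt_of_pos _ (by exact_mod_cast hp₃)⟩
  have hm₃s : m₃ + s₃ * (p₃ : ℤ) = -q₂ := by
    have := Int.mul_ediv_add_emod (-m₃) (p₃ : ℤ)
    rw [mul_comm] at this
    simp only [hq₂def, hs₃def]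
    omega
  set u₃ : Fin 3 → ℚ := v₃ + s₃ • w₂ with hu₃def
  have hu₃M : u₃ ∈ M := add_mem hv₃M (zsmul_mem hw₂M _)
  have hu₃1 : u₃ 1 = -(q₂ : ℚ) / (p₂ * p₃) := by
    have hQ : (m₃ : ℚ) = -(q₂ : ℚ) - (s₃ : ℚ) * p₃ := by
      exact_mod_cast congrArg (Int.cast : ℤ → ℚ) (by linarith [hm₃s] : m₃ = -q₂ - s₃ * p₃)
    have e1 : u₃ 1 = v₃ 1 + (s₃ : ℚ) * w₂ 1 := add_zsmul_apply v₃ w₂ s₃ 1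
    rw [e1, hm₃, hw₂1, hQ]
    field_simp
    ring
  have hu₃2 : u₃ 2 = (1 : ℚ) / p₃ := by
    have e1 : u₃ 2 = v₃ 2 + (s₃ : ℚ) * w₂ 2 := add_zsmul_apply v₃ w₂ s₃ 2
    rw [e1, hv₃2, hw₂2]
    ring
  -- now the first entry of u₃
  obtain ⟨α, hα⟩ : ∃ α : ℤ, u₃ 0 = ((α * p₂ + q₁ * q₂ : ℤ) : ℚ) / (p₁ * p₂ * p₃) := by
    have ht : ((p₃ : ℤ) • u₃ - ![0,0,1] + q₂ • w₂) ∈ sub1 M := by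
      refine mem_sub1.mpr ⟨add_mem (sub_mem (zsmul_mem hu₃M _) hE2) (zsmul_mem hw₂M _), ?_, ?_⟩
      · rw [zsmul_sub_add_apply, hu₃1, hw₂1, vec_at1]
        field_simp
        push_cast
        ring
      · rw [zsmul_sub_add_apply, hu₃2, hw₂2, vec_at2]
        field_simp
        push_cast
        ring
    obtain ⟨k, hk⟩ := memA₁ _ ht
    rw [zsmul_sub_add_apply, hw₂0, vec_at0] at hk
    refine ⟨k, ?_⟩
    have hne : ((p₁:ℚ) * p₂ * p₃) ≠ 0 := mul_ne_zero (mul_ne_zero hp₁Q hp₂Q) hp₃Q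
    push_cast
    rw [eq_div_iff hne]
    field_simp at hk
    first
    | linear_combination hk
    | exact mul_left_cancel₀ hp₁Q (by linear_combination hk)
    | exact mul_left_cancel₀ hp₂Q (by linear_combination hk)
    | exact mul_left_cancel₀ hp₃Q (by linear_combination hk)
  set r₁ : ℤ := (-α) % p₃ with hr₁def
  set s₄ : ℤ := (-α) / p₃ with hs₄def
  have hr₁b : 0 ≤ r₁ ∧ r₁ < (p₃ : ℤ) := ⟨Int.emod_nonneg _ (by exact_mod_cast hp₃.ne'),
    Int.emod_lt_of_pos _ (by exact_mod_cast hp₃)⟩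
  have hαs : α + s₄ * (p₃ : ℤ) = -r₁ := by
    have := Int.mul_ediv_add_emod (-α) (p₃ : ℤ)
    rw [mul_comm] at this
    simp only [hr₁def, hs₄def]
    omega
  set w₃ : Fin 3 → ℚ :=
    ![((q₁ * q₂ - r₁ * p₂ : ℤ) : ℚ)/(p₁ * p₂ * p₃), -(q₂ : ℚ)/(p₂ * p₃), (1 : ℚ)/p₃] with hw₃def
  have hw₃v : w₃ = u₃ + s₄ • w₁ := by
    refine vec_ext ?_ ?_ ?_
    · have hQ : (α : ℚ) = -(r₁ : ℚ) - (s₄ : ℚ) * p₃ := by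
        exact_mod_cast congrArg (Int.cast : ℤ → ℚ) (by linarith [hαs] : α = -r₁ - s₄ * p₃)
      have e1 : (u₃ + s₄ • w₁) 0 = u₃ 0 + (s₄ : ℚ) * w₁ 0 := add_zsmul_apply u₃ w₁ s₄ 0
      rw [hw₃def, vec_at0, e1, hα, hw₁def, vec_at0]
      push_cast
      rw [hQ]
      field_simp
      ring
    · have e1 : (u₃ + s₄ • w₁) 1 = u₃ 1 + (s₄ : ℚ) * w₁ 1 := add_zsmul_apply u₃ w₁ s₄ 1
      rw [hw₃def, vec_at1, e1, hu₃1, hw₁def, vec_at1]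
      ring
    · have e1 : (u₃ + s₄ • w₁) 2 = u₃ 2 + (s₄ : ℚ) * w₁ 2 := add_zsmul_apply u₃ w₁ s₄ 2
      rw [hw₃def, vec_at2, e1, hu₃2, hw₁def, vec_at2]
      ring
  have hw₃M : w₃ ∈ M := hw₃v ▸ add_mem hu₃M (zsmul_mem hw₁M _)
  have hw₃0 : w₃ 0 = ((q₁ * q₂ - r₁ * p₂ : ℤ) : ℚ)/(p₁ * p₂ * p₃) := by rw [hw₃def, vec_at0]
  have hw₃1 : w₃ 1 = -(q₂ : ℚ)/(p₂ * p₃) := by rw [hw₃def, vec_at1]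
  have hw₃2 : w₃ 2 = (1 : ℚ)/p₃ := by rw [hw₃def, vec_at2]
  have hw₁0 : w₁ 0 = (1 : ℚ)/p₁ := by rw [hw₁def, vec_at0]
  have hw₁1 : w₁ 1 = 0 := by rw [hw₁def, vec_at1]
  have hw₁2 : w₁ 2 = 0 := by rw [hw₁def, vec_at2]
  -- coordinates of integer combinations of the w's
  have hcoord2 : ∀ a b c : ℤ, (a • w₁ + b • w₂ + c • w₃) 2 = (c : ℚ)/p₃ := by
    intro a b c
    rw [triple_apply, hw₁2, hw₂2, hw₃2]
    ring
  have hcoord1 : ∀ a b c : ℤ, (a • w₁ + b • w₂ + c • w₃) 1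
      = (b : ℚ)/p₂ - (c : ℚ) * q₂/(p₂ * p₃) := by
    intro a b c
    rw [triple_apply, hw₁1, hw₂1, hw₃1]
    ring
  have hcoord0 : ∀ a b c : ℤ, (a • w₁ + b • w₂ + c • w₃) 0
      = (a : ℚ)/p₁ - (b : ℚ) * q₁/(p₁ * p₂)
        + (c : ℚ) * ((q₁ * q₂ - r₁ * p₂ : ℤ) : ℚ)/(p₁ * p₂ * p₃) := by
    intro a b c
    rw [triple_apply, hw₁0, hw₂0, hw₃0]
    ring
  -- decomposition of members of M
  have hmemw : ∀ a b c : ℤ, a • w₁ + b • w₂ + c • w₃ ∈ M := fun a b c =>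
    add_mem (add_mem (zsmul_mem hw₁M a) (zsmul_mem hw₂M b)) (zsmul_mem hw₃M c)
  have hdecomp : ∀ x ∈ M, ∃ a b c : ℤ, x = a • w₁ + b • w₂ + c • w₃ := by
    intro x hx
    obtain ⟨c, hc⟩ := memA₃ x hx
    have hyM : (x - c • w₃) ∈ sub2 M := mem_sub2.mpr ⟨sub_mem hx (zsmul_mem hw₃M _), by
      rw [sub_zsmul_apply, hc, hw₃2]; ring⟩
    obtain ⟨b, hb⟩ := memA₂ _ hyM
    have hzM : (x - c • w₃ - b • w₂) ∈ sub1 M := mem_sub1.mpr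
      ⟨sub_mem (mem_sub2.mp hyM).1 (zsmul_mem hw₂M _), by
        rw [sub_zsmul_apply, hb, hw₂1]; ring, by
        rw [sub_zsmul_apply, (mem_sub2.mp hyM).2, hw₂2]; ring⟩
    obtain ⟨a, ha⟩ := memA₁ _ hzM
    have hzero : x - c • w₃ - b • w₂ - a • w₁ = 0 := by
      refine vec_ext ?_ ?_ ?_
      · rw [sub_zsmul_apply, ha, hw₁0]; show _ = (0 : Fin 3 → ℚ) 0; simp; ring
      · rw [sub_zsmul_apply, (mem_sub1.mp hzM).2.1, hw₁1]; show _ = (0 : Fin 3 → ℚ) 1; simp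
      · rw [sub_zsmul_apply, (mem_sub1.mp hzM).2.2, hw₁2]; show _ = (0 : Fin 3 → ℚ) 2; simp
    refine ⟨a, b, c, ?_⟩
    have := sub_eq_zero.mp hzero
    rw [sub_sub, sub_sub] at hzero
    have h2 := sub_eq_zero.mp hzero
    rw [h2]
    abel
  -- small-coefficient elements of the integer lattice vanish
  have hker : ∀ a b c : ℤ, (a • w₁ + b • w₂ + c • w₃) ∈ intLattice →
      -(p₁ : ℤ) < a → a < p₁ → -(p₂ : ℤ) < b → b < p₂ → -(p₃ : ℤ) < c → c < p₃ →
      a = 0 ∧ b = 0 ∧ c = 0 := by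
    intro a b c hmem ha1 ha2 hb1 hb2 hc1 hc2
    obtain ⟨k3, hk3⟩ := mem_intLattice.mp hmem 2
    rw [hcoord2 a b c] at hk3
    have hc0 : c = 0 := by
      refine dvd_small ⟨k3, ?_⟩ hc1 hc2
      have : (c : ℚ) = (p₃ : ℚ) * k3 := by field_simp at hk3; linarith [hk3]
      exact_mod_cast this
    obtain ⟨k1, hk1⟩ := mem_intLattice.mp hmem 1
    rw [hcoord1 a b c, hc0] at hk1
    have hb0 : b = 0 := by
      refine dvd_small ⟨k1, ?_⟩ hb1 hb2
      have : (b : ℚ) = (p₂ : ℚ) * k1 := by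
        push_cast at hk1
        field_simp at hk1
        exact mul_right_cancel₀ hp₃Q (by linear_combination hk1)
      exact_mod_cast this
    obtain ⟨k0, hk0⟩ := mem_intLattice.mp hmem 0
    rw [hcoord0 a b c, hb0, hc0] at hk0
    have ha0 : a = 0 := by
      refine dvd_small ⟨k0, ?_⟩ ha1 ha2
      have : (a : ℚ) = (p₁ : ℚ) * k0 := by
        push_cast at hk0
        field_simp at hk0
        exact mul_right_cancel₀ (mul_ne_zero hp₂Q hp₃Q) (by linear_combination hk0)
      exact_mod_cast this
    exact ⟨ha0, hb0, hc0⟩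
  -- integer vectors built from the standard basis
  have hEmem : ∀ α β γ : ℤ, α • (![1,0,0] : Fin 3 → ℚ) + β • ![0,1,0] + γ • ![0,0,1] ∈ intLattice := by
    intro α β γ
    refine mem_intLattice.mpr (fun i => ?_)
    fin_cases i
    · exact ⟨α, by rw [triple_apply]; norm_num⟩
    · exact ⟨β, by rw [triple_apply]; norm_num⟩
    · exact ⟨γ, by rw [triple_apply]; norm_num⟩
  -- the quotient M / ℤ³ has cardinality p₁ p₂ p₃
  set K := intLattice.addSubgroupOf M with hKdef
  set G : Fin p₁ × Fin p₂ × Fin p₃ → (↥M ⧸ K) := fun t =>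
    QuotientAddGroup.mk (⟨((t.1.val : ℤ)) • w₁ + ((t.2.1.val : ℤ)) • w₂ + ((t.2.2.val : ℤ)) • w₃,
      hmemw _ _ _⟩ : ↥M) with hGdef
  have hGinj : Function.Injective G := by
    intro t t' h
    have h2 := QuotientAddGroup.eq.mp h
    have h3 : -(((t.1.val : ℤ)) • w₁ + ((t.2.1.val : ℤ)) • w₂ + ((t.2.2.val : ℤ)) • w₃)
        + (((t'.1.val : ℤ)) • w₁ + ((t'.2.1.val : ℤ)) • w₂ + ((t'.2.2.val : ℤ)) • w₃)
        ∈ intLattice := AddSubgroup.mem_addSubgroupOf.mp h2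
    have h4 : ((t'.1.val - t.1.val : ℤ)) • w₁ + ((t'.2.1.val - t.2.1.val : ℤ)) • w₂
        + ((t'.2.2.val - t.2.2.val : ℤ)) • w₃ ∈ intLattice := by
      have e : ((t'.1.val - t.1.val : ℤ)) • w₁ + ((t'.2.1.val - t.2.1.val : ℤ)) • w₂
          + ((t'.2.2.val - t.2.2.val : ℤ)) • w₃
          = -(((t.1.val : ℤ)) • w₁ + ((t.2.1.val : ℤ)) • w₂ + ((t.2.2.val : ℤ)) • w₃)
            + (((t'.1.val : ℤ)) • w₁ + ((t'.2.1.val : ℤ)) • w₂ + ((t'.2.2.val : ℤ)) • w₃) := by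
        simp only [sub_smul]
        abel
      rw [e]
      exact h3
    have hb1 := t.1.isLt
    have hb2 := t.2.1.isLt
    have hb3 := t.2.2.isLt
    have hb1' := t'.1.isLt
    have hb2' := t'.2.1.isLt
    have hb3' := t'.2.2.isLt
    obtain ⟨e1, e2, e3⟩ := hker _ _ _ h4 (by omega) (by omega) (by omega) (by omega)
      (by omega) (by omega)
    have : t.1.val = t'.1.val ∧ t.2.1.val = t'.2.1.val ∧ t.2.2.val = t'.2.2.val := by omega
    exact Prod.ext (Fin.ext this.1) (Prod.ext (Fin.ext this.2.1) (Fin.ext this.2.2))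
  have hGsurj : Function.Surjective G := by
    intro q
    refine QuotientAddGroup.induction_on q ?_
    rintro ⟨x, hx⟩
    obtain ⟨a, b, c, hxe⟩ := hdecomp x hx
    set c' := c % (p₃ : ℤ) with hc'def
    set γ := c / (p₃ : ℤ) with hγdef
    set b₁ := b - γ * q₂ with hb₁def
    set b' := b₁ % (p₂ : ℤ) with hb'def
    set β := b₁ / (p₂ : ℤ) with hβdef
    set a₁ := a - γ * r₁ - β * q₁ with ha₁def
    set a' := a₁ % (p₁ : ℤ) with ha'def
    set α' := a₁ / (p₁ : ℤ) with hα'def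
    have hp₁Z : (p₁ : ℤ) ≠ 0 := by exact_mod_cast hp₁.ne'
    have hp₂Z : (p₂ : ℤ) ≠ 0 := by exact_mod_cast hp₂.ne'
    have hp₃Z : (p₃ : ℤ) ≠ 0 := by exact_mod_cast hp₃.ne'
    have hc'0 : 0 ≤ c' := Int.emod_nonneg _ hp₃Z
    have hc'lt : c' < p₃ := Int.emod_lt_of_pos _ (by exact_mod_cast hp₃)
    have hb'0 : 0 ≤ b' := Int.emod_nonneg _ hp₂Z
    have hb'lt : b' < p₂ := Int.emod_lt_of_pos _ (by exact_mod_cast hp₂)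
    have ha'0 : 0 ≤ a' := Int.emod_nonneg _ hp₁Z
    have ha'lt : a' < p₁ := Int.emod_lt_of_pos _ (by exact_mod_cast hp₁)
    -- the integer coefficient identities
    have hceq : c = c' + γ * (p₃ : ℤ) := by
      have h1 := Int.mul_ediv_add_emod c (p₃ : ℤ)
      rw [hc'def, hγdef]
      linarith [h1]
    have hbeq : b = b' + β * (p₂ : ℤ) + γ * q₂ := by
      have h1 := Int.mul_ediv_add_emod b₁ (p₂ : ℤ)
      rw [hb'def, hβdef]
      rw [hb₁def] at h1 ⊢
      linarith [h1]
    have haeq : a = a' + α' * (p₁ : ℤ) + β * q₁ + γ * r₁ := by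
      have h1 := Int.mul_ediv_add_emod a₁ (p₁ : ℤ)
      rw [ha'def, hα'def]
      rw [ha₁def] at h1 ⊢
      linarith [h1]
    refine ⟨⟨⟨a'.toNat, by omega⟩, ⟨b'.toNat, by omega⟩, ⟨c'.toNat, by omega⟩⟩, ?_⟩
    refine (QuotientAddGroup.eq).mpr (AddSubgroup.mem_addSubgroupOf.mpr ?_)
    have hcast1 : ((a'.toNat : ℕ) : ℤ) = a' := Int.toNat_of_nonneg ha'0
    have hcast2 : ((b'.toNat : ℕ) : ℤ) = b' := Int.toNat_of_nonneg hb'0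
    have hcast3 : ((c'.toNat : ℕ) : ℤ) = c' := Int.toNat_of_nonneg hc'0
    have hQa : (a : ℚ) = (a' : ℚ) + (α' : ℚ) * p₁ + (β : ℚ) * q₁ + (γ : ℚ) * r₁ := by
      exact_mod_cast congrArg (Int.cast : ℤ → ℚ) haeq
    have hQb : (b : ℚ) = (b' : ℚ) + (β : ℚ) * p₂ + (γ : ℚ) * q₂ := by
      exact_mod_cast congrArg (Int.cast : ℤ → ℚ) hbeq
    have hQc : (c : ℚ) = (c' : ℚ) + (γ : ℚ) * p₃ := by
      exact_mod_cast congrArg (Int.cast : ℤ → ℚ) hceq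
    have key : -((a' • w₁ + b' • w₂ + c' • w₃ : Fin 3 → ℚ)) + x
        = α' • (![1,0,0] : Fin 3 → ℚ) + β • ![0,1,0] + γ • ![0,0,1] := by
      rw [hxe]
      refine vec_ext ?_ ?_ ?_
      · rw [neg_add_apply, hcoord0 a b c, hcoord0 a' b' c', triple_apply]
        rw [hQa, hQb, hQc]
        norm_num
        push_cast
        field_simp
        ring
      · rw [neg_add_apply, hcoord1 a b c, hcoord1 a' b' c', triple_apply]
        rw [hQb, hQc]
        norm_num
        field_simp
        ring
      · rw [neg_add_apply, hcoord2 a b c, hcoord2 a' b' c', triple_apply]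
        rw [hQc]
        norm_num
        field_simp
        rw [vec_at2, vec_at2, vec_at2]
        ring
    show (-(((a'.toNat : ℤ)) • w₁ + ((b'.toNat : ℤ)) • w₂ + ((c'.toNat : ℤ)) • w₃) + x)
        ∈ intLattice
    rw [hcast1, hcast2, hcast3, key]
    exact hEmem α' β γ
  -- cardinality of the quotient
  have hcard : Nat.card (↥M ⧸ K) = p₁ * p₂ * p₃ := by
    rw [← Nat.card_eq_of_bijective G ⟨hGinj, hGsurj⟩]
    simp [Nat.card_eq_fintype_card]
    ring
  have hneq : n = p₁ * p₂ * p₃ := by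
    rw [← hidx]
    exact hcard
  -- the matrix part
  refine ⟨p₁, p₂, p₃, hp₁, hp₂, hp₃, hneq, q₁, q₂, r₁, hq₁b, hq₂b, hr₁b, ?_⟩
  set L : Matrix (Fin 3) (Fin 3) ℚ :=
    !![(p₁ : ℚ), 0, 0; (q₁ : ℚ), (p₂ : ℚ), 0; (r₁ : ℚ), (q₂ : ℚ), (p₃ : ℚ)] with hLdef
  set W : Matrix (Fin 3) (Fin 3) ℚ := Matrix.of ![w₁, w₂, w₃] with hWdef
  have hLW : L * W = 1 := by
    ext i j
    fin_cases i <;> fin_cases j <;>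
      simp [hLdef, hWdef, Matrix.mul_apply, Fin.sum_univ_three, hw₁def, hw₂def, hw₃def,
        Matrix.one_apply] <;>
      push_cast <;> field_simp <;> ring
  have hLinv : L⁻¹ = W := Matrix.inv_eq_right_inv hLW
  rw [hLinv]
  have hrow0 : (fun j => W 0 j) = w₁ := by funext j; simp [hWdef]
  have hrow1 : (fun j => W 1 j) = w₂ := by funext j; simp [hWdef]
  have hrow2 : (fun j => W 2 j) = w₃ := by funext j; simp [hWdef]
  apply le_antisymm
  · intro x hx
    obtain ⟨a, b, c, hxe⟩ := hdecomp x hx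
    rw [hxe]
    refine add_mem (add_mem (zsmul_mem (AddSubgroup.subset_closure (Set.mem_range.mpr ⟨0, hrow0⟩)) a)
      (zsmul_mem (AddSubgroup.subset_closure (Set.mem_range.mpr ⟨1, hrow1⟩)) b))
      (zsmul_mem (AddSubgroup.subset_closure (Set.mem_range.mpr ⟨2, hrow2⟩)) c)
  · rw [AddSubgroup.closure_le]
    rintro y ⟨i, rfl⟩
    fin_cases i
    · show (fun j => W 0 j) ∈ (M : Set (Fin 3 → ℚ))
      rw [hrow0]; exact hw₁M
    · show (fun j => W 1 j) ∈ (M : Set (Fin 3 → ℚ))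
      rw [hrow1]; exact hw₂M
    · show (fun j => W 2 j) ∈ (M : Set (Fin 3 → ℚ))
      rw [hrow2]; exact hw₃M
end

section
/- Let n ≥ 1 and let g = (a, b, c) ∈ (ℤ/nℤ)³ be a nonzero element such that the additive orders of a, b and c are not all equal. Then no pattern A in (ℤ/nℤ)³ is fixed by translation by g, i.e. there is no pattern A with { x + g : x ∈ A } = A. -/
/-- A pattern in the discrete torus `(ℤ/nℤ)³` is a set of `n` points any two distinct
members of which differ in all three coordinates. -/
def IsPattern (n : ℕ) (A : Finset (Fin 3 → ZMod n)) : Prop :=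
  A.card = n ∧ ∀ x ∈ A, ∀ y ∈ A, x ≠ y → ∀ i, x i ≠ y i

theorem stmt11 (n : ℕ) (hn : 1 ≤ n) (g : Fin 3 → ZMod n) (hg : g ≠ 0)
    (hord : ¬ (addOrderOf (g 0) = addOrderOf (g 1) ∧ addOrderOf (g 1) = addOrderOf (g 2))) :
    ∀ A : Finset (Fin 3 → ZMod n), IsPattern n A → A.image (fun x => x + g) ≠ A := by
  rintro A ⟨hcard, hdiff⟩ heq
  -- membership is preserved under translation by g
  have hmem : ∀ x ∈ A, x + g ∈ A := by
    intro x hx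
    rw [← heq]
    exact Finset.mem_image_of_mem _ hx
  have hsm : ∀ (k : ℕ) (x : Fin 3 → ZMod n), x ∈ A → x + k • g ∈ A := by
    intro k
    induction k with
    | zero => simpa using fun x hx => hx
    | succ k ih =>
      intro x hx
      have := hmem _ (ih x hx)
      have h : x + k • g + g = x + (k + 1) • g := by
        rw [add_nsmul, one_nsmul, add_assoc]
      rwa [h] at this
  -- A is nonempty
  have hne : A.Nonempty := Finset.card_pos.mp (by omega)
  obtain ⟨x, hx⟩ := hne
  -- for each i, (addOrderOf (g i)) • g = 0
  have step : ∀ i : Fin 3, (addOrderOf (g i)) • g = 0 := by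
    intro i
    set k := addOrderOf (g i) with hk
    have hy : x + k • g ∈ A := hsm k x hx
    have hagree : (x + k • g) i = x i := by
      have h0 : (k • g) i = 0 := by
        show k • (g i) = 0
        rw [hk]; exact addOrderOf_nsmul_eq_zero (g i)
      show x i + (k • g) i = x i
      rw [h0, add_zero]
    have hxy : x + k • g = x := by
      by_contra hne'
      exact hdiff _ hy _ hx hne' i hagree
    have h := hxy.trans (add_zero x).symm
    exact add_left_cancel h
  have hdvd : ∀ i j : Fin 3, addOrderOf (g j) ∣ addOrderOf (g i) := by
    intro i j
    apply addOrderOf_dvd_of_nsmul_eq_zero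
    have := congrFun (step i) j
    simpa using this
  exact hord ⟨Nat.dvd_antisymm (hdvd 1 0) (hdvd 0 1),
    Nat.dvd_antisymm (hdvd 2 1) (hdvd 1 2)⟩
end

section
/- Let n ≥ 1 and let g = (a, b, c) ∈ (ℤ/nℤ)³ be an element such that a, b and c all have the same additive order r. Then the number of patterns A in (ℤ/nℤ)³ fixed by translation by g (i.e. with { x + g : x ∈ A } = A) equals the square of the product n·(n−r)·(n−2r)⋯r, that is, (∏_{j=0}^{n/r − 1} (n − j·r))². -/
open Finset

lemma smul_congr {n : ℕ} {a b : ZMod n} {r : ℕ} (ha : addOrderOf a = r) (hb : addOrderOf b = r)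
    {k l : ℤ} (h : k • a = l • a) : k • b = l • b := by
  have h0 : (k - l) • a = 0 := by rw [sub_smul, h, sub_self]
  have hd : ((r : ℕ) : ℤ) ∣ (k - l) := by
    rw [← ha]; exact addOrderOf_dvd_iff_zsmul_eq_zero.mpr h0
  have h1 : (k - l) • b = 0 := addOrderOf_dvd_iff_zsmul_eq_zero.mp (by rw [hb]; exact hd)
  rw [sub_smul, sub_eq_zero] at h1; exact h1

lemma exists_nat_smul {n : ℕ} {a : ZMod n} {r : ℕ} (ha : addOrderOf a = r) (hr : r ≠ 0) (k : ℤ) :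
    ∃ j : ℕ, j < r ∧ (j : ℤ) • a = k • a := by
  have h1 : 0 ≤ k % (r : ℤ) := Int.emod_nonneg k (by exact_mod_cast hr)
  have h2 : k % (r : ℤ) < r := Int.emod_lt_of_pos k (by exact_mod_cast Nat.pos_of_ne_zero hr)
  refine ⟨(k % r).toNat, by omega, ?_⟩
  have h3 : (((k % r).toNat : ℕ) : ℤ) = k % r := Int.toNat_of_nonneg h1
  rw [h3]
  have hd : ((r : ℕ) : ℤ) ∣ (k % r - k) := by
    have h4 : k % (r : ℤ) - k = -((r : ℤ) * (k / r)) := by rw [Int.emod_def]; ring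
    rw [h4]; exact dvd_neg.mpr (Dvd.intro _ rfl)
  have h5 : (k % r - k) • a = 0 := addOrderOf_dvd_iff_zsmul_eq_zero.mp (by rw [ha]; exact hd)
  rw [sub_smul, sub_eq_zero] at h5; exact h5

lemma keyK {n : ℕ} [NeZero n] {a : ZMod n} {r m : ℕ} (ha : addOrderOf a = r)
    (hmr : n = m * r) {z : ZMod n} (hz : m ∣ z.val) : ∃ k : ℤ, z = k • a := by
  have hn0 : n ≠ 0 := NeZero.ne n
  have hr0 : r ≠ 0 := by rintro rfl; simp at hmr; omega
  have hca : ((a.val : ℕ) : ZMod n) = a := by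
    rw [ZMod.natCast_val, ZMod.cast_id]
  have h2 : n / n.gcd a.val = r := by
    rw [← ZMod.addOrderOf_coe a.val hn0, hca, ha]
  have hgd : n.gcd a.val ∣ n := Nat.gcd_dvd_left _ _
  have hg : n.gcd a.val = m := by
    have h3 := Nat.div_mul_cancel hgd
    rw [h2] at h3
    have h4 : r * n.gcd a.val = r * m := by
      rw [mul_comm r m, ← hmr]; exact h3
    exact Nat.eq_of_mul_eq_mul_left (Nat.pos_of_ne_zero hr0) h4
  obtain ⟨s, hs⟩ := hz
  refine ⟨(s : ℤ) * n.gcdB a.val, ?_⟩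
  have hbez := Nat.gcd_eq_gcd_ab n a.val
  rw [hg] at hbez
  have hz' : z = ((z.val : ℕ) : ZMod n) := by rw [ZMod.natCast_val, ZMod.cast_id]
  rw [zsmul_eq_mul, hz', hs]
  calc ((m * s : ℕ) : ZMod n) = (((m : ℤ) * (s : ℤ) : ℤ) : ZMod n) := by push_cast; ring
    _ = ((((n : ℤ) * n.gcdA a.val + (a.val : ℤ) * n.gcdB a.val) * (s : ℤ) : ℤ) : ZMod n) := by
        rw [← hbez]
    _ = (((s : ℤ) * n.gcdB a.val : ℤ) : ZMod n) * ((a.val : ℕ) : ZMod n) := by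
        push_cast [ZMod.natCast_self]; ring
    _ = (((s : ℤ) * n.gcdB a.val : ℤ) : ZMod n) * a := by rw [hca]

open Classical in
noncomputable def transfer {n : ℕ} (a b x : ZMod n) : ZMod n :=
  if h : ∃ k : ℤ, x = k • a then (Classical.choose h) • b else 0

lemma transfer_smul {n : ℕ} {a b : ZMod n} {r : ℕ} (ha : addOrderOf a = r)
    (hb : addOrderOf b = r) (k : ℤ) : transfer a b (k • a) = k • b := by
  have h : ∃ k' : ℤ, k • a = k' • a := ⟨k, rfl⟩
  rw [transfer]
  rw [dif_pos h]
  exact smul_congr ha hb (Classical.choose_spec h).symm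
lemma card_equivariant (n r m : ℕ) [NeZero n] (hmr : n = m * r) (a b : ZMod n)
    (ha : addOrderOf a = r) (hb : addOrderOf b = r) :
    Nat.card {f : ZMod n → ZMod n // Function.Bijective f ∧ ∀ x, f (x + a) = f x + b} =
      m.factorial * r ^ m := by
  have hn0 : n ≠ 0 := NeZero.ne n
  have hm0 : m ≠ 0 := by rintro rfl; simp at hmr; omega
  have hr0 : r ≠ 0 := by rintro rfl; simp at hmr; omega
  haveI : NeZero m := ⟨hm0⟩
  have hdvd : m ∣ n := ⟨r, hmr⟩
  set π : ZMod n →+* ZMod m := ZMod.castHom hdvd (ZMod m) with hπdef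
  set s : ZMod m → ZMod n := fun y => ((y.val : ℕ) : ZMod n) with hsdef
  have hπs : ∀ y, π (s y) = y := by
    intro y
    show π ((y.val : ℕ) : ZMod n) = y
    rw [map_natCast, ZMod.natCast_val, ZMod.cast_id]
  have hker : ∀ z : ZMod n, π z = 0 ↔ m ∣ z.val := by
    intro z
    have h1 : π z = ((z.val : ℕ) : ZMod m) := by
      conv_lhs => rw [show z = ((z.val : ℕ) : ZMod n) by rw [ZMod.natCast_val, ZMod.cast_id]]
      rw [map_natCast]
    rw [h1]
    exact ZMod.natCast_eq_zero_iff z.val m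
  have hKa : ∀ z : ZMod n, π z = 0 → ∃ k : ℤ, z = k • a :=
    fun z hz => keyK ha hmr ((hker z).mp hz)
  have hKb : ∀ z : ZMod n, π z = 0 → ∃ k : ℤ, z = k • b :=
    fun z hz => keyK hb hmr ((hker z).mp hz)
  have hπtor : ∀ c : ZMod n, addOrderOf c = r → π c = 0 := by
    intro c hc
    have hrc : r • c = 0 := by rw [← hc]; exact addOrderOf_nsmul_eq_zero c
    have h1 : ((r * c.val : ℕ) : ZMod n) = 0 := by
      push_cast
      rw [ZMod.natCast_val, ZMod.cast_id, ← nsmul_eq_mul]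
      exact hrc
    have h2 : n ∣ r * c.val := (ZMod.natCast_eq_zero_iff _ n).mp h1
    have h3 : m ∣ c.val := by
      rcases h2 with ⟨t, ht⟩
      refine ⟨t, ?_⟩
      have h5 : r * c.val = r * (m * t) := by
        rw [ht, hmr]; ring
      exact Nat.eq_of_mul_eq_mul_left (Nat.pos_of_ne_zero hr0) h5
    exact (hker c).mpr h3
  have hπa : π a = 0 := hπtor a ha
  have hπb : π b = 0 := hπtor b hb
  have hsa : ∀ x : ZMod n, π (x - s (π x)) = 0 := by
    intro x; rw [map_sub, hπs, sub_self]
  -- cardinality of the kernel subtype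
  have hC : Nat.card {z : ZMod n // π z = 0} = r := by
    have hmem : ∀ j : Fin r, π (((j : ℕ) • a : ZMod n)) = 0 := by
      intro j; rw [map_nsmul, hπa, smul_zero]
    have hbij : Function.Bijective (fun j : Fin r =>
        (⟨(j : ℕ) • a, hmem j⟩ : {z : ZMod n // π z = 0})) := by
      constructor
      · have key : ∀ (u v : Fin r), (u : ℕ) ≤ (v : ℕ) →
            (u : ℕ) • a = (v : ℕ) • a → u = v := by
          intro u v hle hev
          have h2 : ((v : ℕ) - (u : ℕ)) • a = 0 := by
            rw [sub_nsmul a hle, ← hev, add_neg_cancel]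
          have h3 := addOrderOf_dvd_iff_nsmul_eq_zero.mpr h2
          rw [ha] at h3
          have h4 : (v : ℕ) - (u : ℕ) = 0 := Nat.eq_zero_of_dvd_of_lt h3 (by omega)
          have := u.isLt; have := v.isLt
          exact Fin.ext (by omega)
        intro j j' h
        have h1 : (j : ℕ) • a = (j' : ℕ) • a := congrArg Subtype.val h
        rcases le_total (j : ℕ) (j' : ℕ) with hle | hle
        · exact key j j' hle h1
        · exact (key j' j hle h1.symm).symm
      · rintro ⟨z, hz⟩
        obtain ⟨k, hk⟩ := hKa z hz
        obtain ⟨j, hj, hja⟩ := exists_nat_smul ha hr0 k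
        refine ⟨⟨j, hj⟩, ?_⟩
        apply Subtype.ext
        show (j : ℕ) • a = z
        rw [hk, ← hja, natCast_zsmul]
    have h9 := Nat.card_eq_of_bijective _ hbij
    rw [Nat.card_eq_fintype_card, Fintype.card_fin] at h9
    exact h9.symm
  -- the map G from pairs to equivariant bijections
  set G0 : ((ZMod m ≃ ZMod m) × (ZMod m → {z : ZMod n // π z = 0})) → ZMod n → ZMod n :=
    fun ec x => s (ec.1 (π x)) + ((ec.2 (π x) : {z : ZMod n // π z = 0}) : ZMod n)
      + transfer a b (x - s (π x)) with hG0def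
  have hG0π : ∀ ec x, π (G0 ec x) = ec.1 (π x) := by
    intro ec x
    obtain ⟨k, hk⟩ := hKa _ (hsa x)
    show π (s (ec.1 (π x)) + _ + transfer a b (x - s (π x))) = ec.1 (π x)
    rw [hk, transfer_smul ha hb, map_add, map_add, hπs, map_zsmul, hπb, smul_zero, add_zero,
      (ec.2 (π x)).2, add_zero]
  have hG0eqv : ∀ ec x, G0 ec (x + a) = G0 ec x + b := by
    intro ec x
    have h1 : π (x + a) = π x := by rw [map_add, hπa, add_zero]
    obtain ⟨k, hk⟩ := hKa _ (hsa x)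
    have h2 : x + a - s (π (x + a)) = (k + 1) • a := by
      rw [h1, add_smul, one_smul, ← hk]; ring
    show s (ec.1 (π (x + a))) + _ + transfer a b (x + a - s (π (x + a)))
        = s (ec.1 (π x)) + _ + transfer a b (x - s (π x)) + b
    rw [h2, transfer_smul ha hb, h1, hk, transfer_smul ha hb, add_smul, one_smul]
    ring
  have hG0inj : ∀ ec, Function.Injective (G0 ec) := by
    intro ec x x' h
    have hp : ec.1 (π x) = ec.1 (π x') := by rw [← hG0π ec x, ← hG0π ec x', h]
    have hpp : π x = π x' := ec.1.injective hp
    obtain ⟨k, hk⟩ := hKa _ (hsa x)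
    obtain ⟨k', hk'⟩ := hKa _ (hsa x')
    have hss : s (π x) = s (π x') := congrArg s hpp
    have h' : s (ec.1 (π x)) + ((ec.2 (π x) : {z : ZMod n // π z = 0}) : ZMod n)
        + transfer a b (x - s (π x))
        = s (ec.1 (π x')) + ((ec.2 (π x') : {z : ZMod n // π z = 0}) : ZMod n)
        + transfer a b (x' - s (π x')) := h
    rw [hpp] at h'
    have ht := add_left_cancel h'
    rw [hk', ← hss, hk, transfer_smul ha hb, transfer_smul ha hb] at ht
    have hka : k • a = k' • a := smul_congr hb ha ht
    have h3 : x - s (π x) = x' - s (π x') := by rw [hk, hk', hka]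
    rw [← hss] at h3
    exact sub_left_injective h3
  set G : ((ZMod m ≃ ZMod m) × (ZMod m → {z : ZMod n // π z = 0})) →
      {f : ZMod n → ZMod n // Function.Bijective f ∧ ∀ x, f (x + a) = f x + b} :=
    fun ec => ⟨G0 ec, Finite.injective_iff_bijective.mp (hG0inj ec), hG0eqv ec⟩ with hGdef
  have ht0 : transfer a b 0 = 0 := by
    have : transfer a b ((0 : ℤ) • a) = (0 : ℤ) • b := transfer_smul ha hb 0
    rwa [zero_zsmul, zero_zsmul] at this
  have hGs : ∀ ec y, G0 ec (s y) = s (ec.1 y) + ((ec.2 y : {z : ZMod n // π z = 0}) : ZMod n) := by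
    intro ec y
    show s (ec.1 (π (s y))) + _ + transfer a b (s y - s (π (s y))) = _
    rw [hπs, sub_self, ht0, add_zero]
  have hGinj : Function.Injective G := by
    intro ec ec' h
    have h0 : G0 ec = G0 ec' := congrArg Subtype.val h
    have he : ∀ y, ec.1 y = ec'.1 y := by
      intro y
      rw [← hπs y, ← hG0π ec (s y), ← hG0π ec' (s y), h0]
    have hc : ∀ y, ec.2 y = ec'.2 y := by
      intro y
      have h1 : G0 ec (s y) = G0 ec' (s y) := by rw [h0]
      rw [hGs, hGs, he y] at h1
      exact Subtype.ext (add_left_cancel h1)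
    exact Prod.ext (Equiv.ext he) (funext hc)
  have hGsurj : Function.Surjective G := by
    rintro ⟨f, hfb, hfeq⟩
    have hnat : ∀ (k : ℕ) (x : ZMod n), f (x + k • a) = f x + k • b := by
      intro k
      induction k with
      | zero => intro x; simp
      | succ k ih =>
        intro x
        rw [succ_nsmul, succ_nsmul, ← add_assoc, ← add_assoc, hfeq, ih]
    have hint : ∀ (k : ℤ) (x : ZMod n), f (x + k • a) = f x + k • b := by
      intro k x
      obtain ⟨j, hj, hja⟩ := exists_nat_smul ha hr0 k
      have hjb : (j : ℤ) • b = k • b := smul_congr ha hb hja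
      rw [← hja, ← hjb, natCast_zsmul, natCast_zsmul]
      exact hnat j x
    set e0 : ZMod m → ZMod m := fun y => π (f (s y)) with he0def
    have he0inj : Function.Injective e0 := by
      intro y y' h
      have h1 : π (f (s y) - f (s y')) = 0 := by
        rw [map_sub]
        show e0 y - e0 y' = 0
        rw [h, sub_self]
      obtain ⟨k, hk⟩ := hKb _ h1
      have h2 : f (s y) = f (s y' + k • a) := by
        rw [hint k (s y'), ← hk]; ring
      have h3 : s y = s y' + k • a := hfb.1 h2
      have h4 := congrArg π h3
      rwa [hπs, map_add, hπs, map_zsmul, hπa, smul_zero, add_zero] at h4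
    have he0bij := Finite.injective_iff_bijective.mp he0inj
    refine ⟨⟨Equiv.ofBijective e0 he0bij, fun y => ⟨f (s y) - s (e0 y), ?_⟩⟩, ?_⟩
    · rw [map_sub, hπs]
      show π (f (s y)) - e0 y = 0
      rw [he0def, sub_self]
    · apply Subtype.ext
      funext x
      show s (Equiv.ofBijective e0 he0bij (π x)) + (f (s (π x)) - s (e0 (π x)))
          + transfer a b (x - s (π x)) = f x
      obtain ⟨k, hk⟩ := hKa _ (hsa x)
      rw [hk, transfer_smul ha hb]
      have hx : x = s (π x) + k • a := by rw [← hk]; ring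
      conv_rhs => rw [hx, hint]
      show s (e0 (π x)) + (f (s (π x)) - s (e0 (π x))) + k • b = f (s (π x)) + k • b
      ring
  have hcard := Nat.card_eq_of_bijective G ⟨hGinj, hGsurj⟩
  rw [← hcard, Nat.card_prod, Nat.card_fun, hC]
  rw [Nat.card_eq_fintype_card, Nat.card_eq_fintype_card,
    Fintype.card_equiv (Equiv.refl _), ZMod.card]
theorem stmt12 (n : ℕ) (hn : 1 ≤ n) (g : Fin 3 → ZMod n) (r : ℕ)
    (h0 : addOrderOf (g 0) = r) (h1 : addOrderOf (g 1) = r) (h2 : addOrderOf (g 2) = r) :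
    Set.ncard {A : Finset (Fin 3 → ZMod n) | IsPattern n A ∧ A.image (fun x => x + g) = A} =
      (∏ j ∈ Finset.range (n / r), (n - j * r)) ^ 2 := by
  haveI : NeZero n := ⟨by omega⟩
  have hdvd : r ∣ n := by
    have := addOrderOf_dvd_card (x := g 0)
    rwa [ZMod.card, h0] at this
  set m := n / r with hm
  have hmr : n = m * r := (Nat.div_mul_cancel hdvd).symm
  have hRHS : ∏ j ∈ Finset.range m, (n - j * r) = m.factorial * r ^ m := by
    have ha1 : ∀ j ∈ Finset.range m, n - j * r = (m - j) * r := by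
      intro j hj; rw [hmr, Nat.sub_mul]
    rw [Finset.prod_congr rfl ha1, Finset.prod_mul_distrib, Finset.prod_const,
      Finset.card_range]
    congr 1
    calc ∏ j ∈ Finset.range m, (m - j)
        = ∏ j ∈ Finset.range m, (m - 1 - j + 1) := by
          apply Finset.prod_congr rfl; intro j hj; rw [Finset.mem_range] at hj; omega
      _ = ∏ j ∈ Finset.range m, (j + 1) := Finset.prod_range_reflect (fun j => j + 1) m
      _ = m.factorial := Finset.prod_range_add_one_eq_factorial m
  have hgen_inj : ∀ σ τ : ZMod n → ZMod n,
      Function.Injective (fun u => (![u, σ u, τ u] : Fin 3 → ZMod n)) := by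
    intro σ τ u v h
    have := congrFun h 0
    simpa using this
  set Φ : (ZMod n → ZMod n) → (ZMod n → ZMod n) → Finset (Fin 3 → ZMod n) :=
    fun σ τ => Finset.univ.image (fun u => ![u, σ u, τ u]) with hΦdef
  have hΦcard : ∀ σ τ, (Φ σ τ).card = n := by
    intro σ τ
    rw [hΦdef]
    rw [Finset.card_image_of_injective _ (hgen_inj σ τ), Finset.card_univ, ZMod.card]
  have hmemΦ : ∀ σ τ x, x ∈ Φ σ τ ↔ ∃ u, (![u, σ u, τ u] : Fin 3 → ZMod n) = x := by
    intro σ τ x; simp [hΦdef]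
  have hΨmem : ∀ σ τ : ZMod n → ZMod n, Function.Injective σ → Function.Injective τ →
      (∀ x, σ (x + g 0) = σ x + g 1) → (∀ x, τ (x + g 0) = τ x + g 2) →
      IsPattern n (Φ σ τ) ∧ (Φ σ τ).image (fun x => x + g) = Φ σ τ := by
    intro σ τ hσi hτi hσe hτe
    have hcomp : ∀ u : ZMod n,
        ((![u, σ u, τ u] : Fin 3 → ZMod n) + g)
          = ![u + g 0, σ (u + g 0), τ (u + g 0)] := by
      intro u
      funext i
      fin_cases i
      · simp
      · simp [hσe]
      · simp [hτe]
    refine ⟨⟨hΦcard σ τ, ?_⟩, ?_⟩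
    · intro x hx y hy hxy i
      obtain ⟨u, hu⟩ := (hmemΦ σ τ x).mp hx
      obtain ⟨v, hv⟩ := (hmemΦ σ τ y).mp hy
      have huv : u ≠ v := by
        rintro rfl
        exact hxy (hu ▸ hv ▸ rfl)
      subst hu; subst hv
      fin_cases i
      · simpa using huv
      · simpa using fun hc => huv (hσi hc)
      · simpa using fun hc => huv (hτi hc)
    · apply Finset.Subset.antisymm
      · intro x hx
        rw [Finset.mem_image] at hx
        obtain ⟨y, hy, hyx⟩ := hx
        obtain ⟨u, hu⟩ := (hmemΦ σ τ y).mp hy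
        rw [hmemΦ]
        exact ⟨u + g 0, by rw [← hyx, ← hu, hcomp u]⟩
      · intro x hx
        obtain ⟨u, hu⟩ := (hmemΦ σ τ x).mp hx
        rw [Finset.mem_image]
        refine ⟨![u - g 0, σ (u - g 0), τ (u - g 0)], (hmemΦ σ τ _).mpr ⟨u - g 0, rfl⟩, ?_⟩
        rw [hcomp (u - g 0), sub_add_cancel]
        exact hu
  set Ψ : ({f : ZMod n → ZMod n // Function.Bijective f ∧ ∀ x, f (x + g 0) = f x + g 1} ×
        {f : ZMod n → ZMod n // Function.Bijective f ∧ ∀ x, f (x + g 0) = f x + g 2}) →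
      ↥{A : Finset (Fin 3 → ZMod n) | IsPattern n A ∧ A.image (fun x => x + g) = A} :=
    fun p => ⟨Φ p.1.1 p.2.1,
      hΨmem p.1.1 p.2.1 p.1.2.1.1 p.2.2.1.1 p.1.2.2 p.2.2.2⟩ with hΨdef
  have hΨinj : Function.Injective Ψ := by
    intro p q h
    have hset : Φ p.1.1 p.2.1 = Φ q.1.1 q.2.1 := congrArg Subtype.val h
    have hall : ∀ u, p.1.1 u = q.1.1 u ∧ p.2.1 u = q.2.1 u := by
      intro u
      have hx : (![u, p.1.1 u, p.2.1 u] : Fin 3 → ZMod n) ∈ Φ q.1.1 q.2.1 := by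
        rw [← hset]; exact (hmemΦ _ _ _).mpr ⟨u, rfl⟩
      obtain ⟨v, hv⟩ := (hmemΦ _ _ _).mp hx
      have h0' : v = u := by have := congrFun hv 0; simpa using this
      subst h0'
      constructor
      · have := congrFun hv 1; symm; simpa using this
      · have := congrFun hv 2; symm; simpa using this
    have e1 : p.1 = q.1 := Subtype.ext (funext fun u => (hall u).1)
    have e2 : p.2 = q.2 := Subtype.ext (funext fun u => (hall u).2)
    exact Prod.ext e1 e2
  have hΨsurj : Function.Surjective Ψ := by
    rintro ⟨A, hA⟩
    obtain ⟨⟨hcard, hdiff⟩, hfix⟩ := hA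
    have hmem_add : ∀ p ∈ A, p + g ∈ A := by
      intro p hp
      rw [← hfix]
      exact Finset.mem_image_of_mem _ hp
    have hinj0 : ∀ p ∈ A, ∀ q ∈ A, p 0 = q 0 → p = q := by
      intro p hp q hq hpq
      by_contra hne
      exact hdiff p hp q hq hne 0 hpq
    have hex : ∀ u : ZMod n, ∃ p, p ∈ A ∧ p 0 = u := by
      intro u
      have himg : A.image (fun p => p 0) = Finset.univ := by
        apply Finset.eq_univ_of_card
        rw [Finset.card_image_of_injOn
          (fun p hp q hq h => hinj0 p (Finset.mem_coe.mp hp) q (Finset.mem_coe.mp hq) h),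
          hcard, ZMod.card]
      have hu : u ∈ A.image (fun p => p 0) := by rw [himg]; exact Finset.mem_univ u
      rw [Finset.mem_image] at hu
      obtain ⟨p, hp, hpu⟩ := hu
      exact ⟨p, hp, hpu⟩
    set P0 : ZMod n → (Fin 3 → ZMod n) := fun u => Classical.choose (hex u) with hP0def
    have hP0 : ∀ u, P0 u ∈ A ∧ P0 u 0 = u := fun u => Classical.choose_spec (hex u)
    have huniq : ∀ q ∈ A, q = P0 (q 0) := by
      intro q hq
      exact hinj0 q hq _ (hP0 (q 0)).1 ((hP0 (q 0)).2.symm)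
    have hP0add : ∀ u, P0 (u + g 0) = P0 u + g := by
      intro u
      have ha1 : P0 u + g ∈ A := hmem_add _ (hP0 u).1
      have ha2 : (P0 u + g) 0 = u + g 0 := by
        rw [Pi.add_apply, (hP0 u).2]
      have ha3 := huniq _ ha1
      rw [ha2] at ha3
      exact ha3.symm
    set σ : ZMod n → ZMod n := fun u => P0 u 1 with hσdef
    set τ : ZMod n → ZMod n := fun u => P0 u 2 with hτdef
    have hP0inj : Function.Injective P0 := by
      intro u v h
      rw [← (hP0 u).2, ← (hP0 v).2, h]
    have hσinj : Function.Injective σ := by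
      intro u v h
      refine hP0inj ?_
      by_contra hne
      exact hdiff _ (hP0 u).1 _ (hP0 v).1 hne 1 h
    have hτinj : Function.Injective τ := by
      intro u v h
      refine hP0inj ?_
      by_contra hne
      exact hdiff _ (hP0 u).1 _ (hP0 v).1 hne 2 h
    have hσe : ∀ u, σ (u + g 0) = σ u + g 1 := by
      intro u
      show P0 (u + g 0) 1 = P0 u 1 + g 1
      rw [hP0add]
      rfl
    have hτe : ∀ u, τ (u + g 0) = τ u + g 2 := by
      intro u
      show P0 (u + g 0) 2 = P0 u 2 + g 2
      rw [hP0add]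
      rfl
    refine ⟨⟨⟨σ, Finite.injective_iff_bijective.mp hσinj, hσe⟩,
      ⟨τ, Finite.injective_iff_bijective.mp hτinj, hτe⟩⟩, ?_⟩
    apply Subtype.ext
    show Φ σ τ = A
    have hsub : Φ σ τ ⊆ A := by
      intro x hx
      obtain ⟨u, hu⟩ := (hmemΦ σ τ x).mp hx
      have hgp : (![u, σ u, τ u] : Fin 3 → ZMod n) = P0 u := by
        funext i
        fin_cases i
        · show u = P0 u 0
          exact (hP0 u).2.symm
        · rfl
        · rfl
      rw [← hu, hgp]
      exact (hP0 u).1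
    exact Finset.eq_of_subset_of_card_le hsub (by rw [hcard, hΦcard])
  rw [← Nat.card_coe_set_eq, ← Nat.card_eq_of_bijective Ψ ⟨hΨinj, hΨsurj⟩, Nat.card_prod,
    card_equivariant n r m hmr (g 0) (g 1) h0 h1,
    card_equivariant n r m hmr (g 0) (g 2) h0 h2, hRHS]
  ring
end

section
/- Let p be a prime number. The number of orbits of the translation action of the group (ℤ/pℤ)³ on the set X(p) of patterns equals ((p!)² + (p−1)³·p²)/p³; equivalently, p³ times the number of orbits equals (p!)² + (p−1)³·p². -/
/-- The orbit of a pattern under the translation action of `(ℤ/nℤ)³`. -/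
def orbitOf (n : ℕ) (A : Finset (Fin 3 → ZMod n)) : Set (Finset (Fin 3 → ZMod n)) :=
  { B | ∃ g : Fin 3 → ZMod n, B = A.image (fun x => x + g) }

/-- The set of orbits of the translation action of `(ℤ/nℤ)³` on the set of patterns. -/
def orbitsOfPatterns (n : ℕ) : Set (Set (Finset (Fin 3 → ZMod n))) :=
  { O | ∃ A : Finset (Fin 3 → ZMod n), IsPattern n A ∧ O = orbitOf n A }

namespace Stmt13Aux

variable (p : ℕ)

abbrev Pt := Fin 3 → ZMod p

variable {p}

lemma shift_pattern {A : Finset (Pt p)} (hA : IsPattern p A) (g : Pt p) :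
    IsPattern p (A.image (fun x => x + g)) := by
  constructor
  · rw [Finset.card_image_of_injective _ (add_left_injective g), hA.1]
  · rintro x hx y hy hxy i
    simp only [Finset.mem_image] at hx hy
    obtain ⟨a, ha, rfl⟩ := hx
    obtain ⟨b, hb, rfl⟩ := hy
    have hab : a ≠ b := fun h => hxy (by rw [h])
    have := hA.2 a ha b hb hab i
    simpa using fun h => this (by simpa using h)

/-- The subtype of patterns. -/
abbrev Xp (p : ℕ) := {A : Finset (Pt p) // IsPattern p A}

instance : AddAction (Pt p) (Xp p) where
  vadd g A := ⟨A.1.image (fun x => x + g), shift_pattern A.2 g⟩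
  zero_vadd A := by
    apply Subtype.ext
    show A.1.image (fun x => x + 0) = A.1
    simp
  add_vadd g h A := by
    apply Subtype.ext
    show A.1.image (fun x => x + (g + h)) = (A.1.image (fun x => x + h)).image (fun x => x + g)
    rw [Finset.image_image]
    congr 1
    funext x
    simp [add_assoc, add_comm g h]

lemma vadd_def (g : Pt p) (A : Xp p) : (g +ᵥ A).1 = A.1.image (fun x => x + g) := rfl

lemma orbitOf_shift (A : Finset (Pt p)) (g : Pt p) :
    orbitOf p (A.image (fun x => x + g)) = orbitOf p A := by
  ext C
  constructor
  · rintro ⟨h, rfl⟩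
    refine ⟨g + h, ?_⟩
    rw [Finset.image_image]
    congr 1
    funext x
    simp [add_assoc]
  · rintro ⟨h, rfl⟩
    refine ⟨h - g, ?_⟩
    rw [Finset.image_image]
    congr 1
    funext x
    simp

section
variable (p : ℕ)

noncomputable def e : Quotient (AddAction.orbitRel (Pt p) (Xp p)) → Set (Finset (Pt p)) :=
  Quotient.lift (fun A => orbitOf p A.1) (by
    rintro A B hAB
    obtain ⟨g, rfl⟩ := hAB
    exact orbitOf_shift B.1 g)

lemma e_injective : Function.Injective (e p) := by
  intro a b
  refine Quotient.inductionOn₂ a b ?_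
  intro A B h
  have hB : B.1 ∈ orbitOf p B.1 := ⟨0, by simp⟩
  rw [show orbitOf p B.1 = e p ⟦B⟧ from rfl, ← h] at hB
  obtain ⟨g, hg⟩ := hB
  have hr : (AddAction.orbitRel (Pt p) (Xp p)).r B A := ⟨g, Subtype.ext hg.symm⟩
  exact Quot.sound ((AddAction.orbitRel (Pt p) (Xp p)).iseqv.symm hr)

lemma range_e : Set.range (e p) = orbitsOfPatterns p := by
  ext O
  constructor
  · rintro ⟨q, rfl⟩
    induction q using Quotient.inductionOn with
    | h A => exact ⟨A.1, A.2, rfl⟩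
  · rintro ⟨A, hA, rfl⟩
    exact ⟨⟦⟨A, hA⟩⟧, rfl⟩

lemma ncard_orbits :
    Set.ncard (orbitsOfPatterns p) =
      Nat.card (Quotient (AddAction.orbitRel (Pt p) (Xp p))) := by
  rw [← range_e, ← Nat.card_coe_set_eq, Nat.card_range_of_injective (e_injective p)]

end

section
variable {p : ℕ} [NeZero p]

noncomputable instance : Fintype (Xp p) := Fintype.ofFinite _

lemma coord_bij {A : Finset (Pt p)} (hA : IsPattern p A) :
    Function.Bijective (fun a : A => (a : Pt p) 0) := by
  rw [Fintype.bijective_iff_injective_and_card]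
  constructor
  · intro a b hab
    by_contra h
    exact hA.2 a.1 a.2 b.1 b.2 (fun e => h (Subtype.ext e)) 0 hab
  · rw [Fintype.card_coe, hA.1, ZMod.card]

def patternOf (σ τ : Equiv.Perm (ZMod p)) : Finset (Pt p) :=
  Finset.univ.image (fun x => ![x, σ x, τ x])

lemma patternOf_isPattern (σ τ : Equiv.Perm (ZMod p)) : IsPattern p (patternOf σ τ) := by
  constructor
  · show (Finset.univ.image (fun x : ZMod p => (![x, σ x, τ x] : Pt p))).card = p
    rw [Finset.card_image_of_injective _
      (fun x y h => by simpa using congrFun h 0 : Function.Injective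
        (fun x : ZMod p => (![x, σ x, τ x] : Pt p))), Finset.card_univ, ZMod.card]
  · rintro a ha b hb hab i
    simp only [patternOf, Finset.mem_image, Finset.mem_univ, true_and] at ha hb
    obtain ⟨x, rfl⟩ := ha; obtain ⟨y, rfl⟩ := hb
    have hxy : x ≠ y := fun h => hab (by rw [h])
    fin_cases i <;> simp [hxy, σ.injective.ne hxy, τ.injective.ne hxy]

noncomputable def toXp : Equiv.Perm (ZMod p) × Equiv.Perm (ZMod p) → Xp p :=
  fun st => ⟨patternOf st.1 st.2, patternOf_isPattern st.1 st.2⟩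

lemma toXp_injective : Function.Injective (toXp (p := p)) := by
  rintro ⟨σ, τ⟩ ⟨σ', τ'⟩ h
  have h' : patternOf σ τ = patternOf σ' τ' := congrArg Subtype.val h
  have key : ∀ x : ZMod p, σ' x = σ x ∧ τ' x = τ x := by
    intro x
    have hx : (![x, σ x, τ x] : Pt p) ∈ patternOf σ' τ' := by
      rw [← h']
      exact Finset.mem_image_of_mem _ (Finset.mem_univ x)
    simp only [patternOf, Finset.mem_image, Finset.mem_univ, true_and] at hx
    obtain ⟨y, hy⟩ := hx
    have h0 : y = x := by simpa using congrFun hy 0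
    subst h0
    exact ⟨by simpa using congrFun hy 1, by simpa using congrFun hy 2⟩
  have : σ' = σ := Equiv.ext fun x => (key x).1
  have : τ' = τ := Equiv.ext fun x => (key x).2
  ext <;> simp_all

lemma toXp_surjective : Function.Surjective (toXp (p := p)) := by
  rintro ⟨A, hA⟩
  have hb := coord_bij hA
  set G := Fintype.bijInv hb with hG
  have hGr : ∀ x, ((G x : A) : Pt p) 0 = x := Fintype.rightInverse_bijInv hb
  have hGinj : Function.Injective G := (Fintype.bijective_bijInv hb).injective
  set sσ : ZMod p → ZMod p := fun x => ((G x : A) : Pt p) 1 with hsσ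
  set sτ : ZMod p → ZMod p := fun x => ((G x : A) : Pt p) 2 with hsτ
  have hne : ∀ x y, x ≠ y → ∀ i, ((G x : A) : Pt p) i ≠ ((G y : A) : Pt p) i := by
    intro x y hxy i
    refine hA.2 _ (G x).2 _ (G y).2 (fun e => hxy ?_) i
    have : G x = G y := Subtype.ext e
    rw [← hGr x, ← hGr y, this]
  have hσinj : Function.Injective sσ := by
    intro x y hxy
    by_contra hne'
    exact hne x y hne' 1 hxy
  have hτinj : Function.Injective sτ := by
    intro x y hxy
    by_contra hne'
    exact hne x y hne' 2 hxy
  refine ⟨⟨Equiv.ofBijective sσ (Finite.injective_iff_bijective.1 hσinj),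
    Equiv.ofBijective sτ (Finite.injective_iff_bijective.1 hτinj)⟩, ?_⟩
  apply Subtype.ext
  show patternOf _ _ = A
  ext a
  simp only [patternOf, Finset.mem_image, Finset.mem_univ, true_and,
    Equiv.ofBijective_apply]
  constructor
  · rintro ⟨x, rfl⟩
    have hv : (![x, sσ x, sτ x] : Pt p) = ((G x : A) : Pt p) := by
      funext i
      fin_cases i <;> simp [hsσ, hsτ, hGr x]
    rw [hv]
    exact (G x).2
  · intro ha
    refine ⟨a 0, ?_⟩
    have hGa : G (a 0) = ⟨a, ha⟩ := by
      apply hb.injective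
      show ((G (a 0) : A) : Pt p) 0 = a 0
      rw [hGr]
    funext i
    fin_cases i <;> simp [hsσ, hsτ, hGa]

lemma card_Xp : Fintype.card (Xp p) = p.factorial ^ 2 := by
  rw [← Fintype.card_of_bijective ⟨toXp_injective, toXp_surjective⟩,
    Fintype.card_prod, Fintype.card_perm, ZMod.card, sq]

end

section
variable {p : ℕ} [Fact p.Prime]

noncomputable instance (g : Pt p) : Fintype (AddAction.fixedBy (Xp p) g) :=
  Fintype.ofFinite _

lemma card_fixed_zero :
    Nat.card (AddAction.fixedBy (Xp p) (0 : Pt p)) = p.factorial ^ 2 := by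
  have : AddAction.fixedBy (Xp p) (0 : Pt p) = Set.univ := by
    ext A
    simp [AddAction.mem_fixedBy]
  rw [this, Nat.card_univ, Nat.card_eq_fintype_card, card_Xp]

lemma card_fixed_of_zero_coord {g : Pt p} (hg : g ≠ 0) (i : Fin 3) (hgi : g i = 0) :
    Nat.card (AddAction.fixedBy (Xp p) g) = 0 := by
  have : AddAction.fixedBy (Xp p) g = ∅ := by
    ext A
    simp only [AddAction.mem_fixedBy, Set.mem_empty_iff_false, iff_false]
    intro hfix
    have himg : A.1.image (fun x => x + g) = A.1 := congrArg Subtype.val hfix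
    have hpos : 0 < A.1.card := by
      rw [A.2.1]
      exact (Fact.out : p.Prime).pos
    obtain ⟨a, ha⟩ := Finset.card_pos.1 hpos
    have hag : a + g ∈ A.1 := by
      rw [← himg]
      exact Finset.mem_image_of_mem _ ha
    have hne : a + g ≠ a := by
      intro h
      exact hg (by simpa using h)
    have := A.2.2 (a + g) hag a ha hne i
    simp [hgi] at this
  simp [this]

def linePat (g : Pt p) (u v : ZMod p) : Finset (Pt p) :=
  Finset.univ.image (fun k : ZMod p => ![0, u, v] + k • g)

lemma linePat_injOn {g : Pt p} (hg : ∀ i, g i ≠ 0) (u v : ZMod p) :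
    Function.Injective (fun k : ZMod p => (![0, u, v] : Pt p) + k • g) := by
  intro k k' h
  have h0 := congrFun h 0
  simp only [Pi.add_apply, Pi.smul_apply, smul_eq_mul] at h0
  exact mul_right_cancel₀ (hg 0) (by simpa using h0)

lemma linePat_isPattern {g : Pt p} (hg : ∀ i, g i ≠ 0) (u v : ZMod p) :
    IsPattern p (linePat g u v) := by
  constructor
  · rw [linePat, Finset.card_image_of_injective _ (linePat_injOn hg u v),
      Finset.card_univ, ZMod.card]
  · rintro a ha b hb hab i
    simp only [linePat, Finset.mem_image, Finset.mem_univ, true_and] at ha hb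
    obtain ⟨k, rfl⟩ := ha; obtain ⟨k', rfl⟩ := hb
    have hkk : k ≠ k' := fun h => hab (by rw [h])
    simp only [Pi.add_apply, Pi.smul_apply, smul_eq_mul, ne_eq, add_right_inj]
    exact fun h => hkk (mul_right_cancel₀ (hg i) h)

lemma linePat_fixed (g : Pt p) (u v : ZMod p) :
    (linePat g u v).image (fun x => x + g) = linePat g u v := by
  ext b
  simp only [linePat, Finset.image_image, Finset.mem_image, Finset.mem_univ, true_and,
    Function.comp]
  constructor
  · rintro ⟨k, rfl⟩
    refine ⟨k + 1, ?_⟩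
    rw [add_smul, one_smul, add_assoc]
  · rintro ⟨k, rfl⟩
    refine ⟨k - 1, ?_⟩
    rw [sub_smul, one_smul, add_assoc, sub_add_cancel]

lemma card_fixed_of_ne_zero_coords {g : Pt p} (hg : ∀ i, g i ≠ 0) :
    Nat.card (AddAction.fixedBy (Xp p) g) = p ^ 2 := by
  have hfield : ∀ a b : ZMod p, a * b = 0 → a = 0 ∨ b = 0 := fun a b => mul_eq_zero.1
  set L : ZMod p × ZMod p → AddAction.fixedBy (Xp p) g := fun uv =>
    ⟨⟨linePat g uv.1 uv.2, linePat_isPattern hg uv.1 uv.2⟩,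
      Subtype.ext (linePat_fixed g uv.1 uv.2)⟩ with hL
  have hmemL : ∀ u v : ZMod p, (![0, u, v] : Pt p) ∈ linePat g u v := by
    intro u v
    refine Finset.mem_image.2 ⟨0, Finset.mem_univ 0, ?_⟩
    simp
  have hLinj : Function.Injective L := by
    rintro ⟨u, v⟩ ⟨u', v'⟩ h
    have h' : linePat g u v = linePat g u' v' :=
      congrArg Subtype.val (congrArg Subtype.val h)
    have hm : (![0, u, v] : Pt p) ∈ linePat g u' v' := by rw [← h']; exact hmemL u v
    simp only [linePat, Finset.mem_image, Finset.mem_univ, true_and] at hm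
    obtain ⟨k, hk⟩ := hm
    have h0 := congrFun hk 0
    simp only [Pi.add_apply, Pi.smul_apply, smul_eq_mul] at h0
    have hk0 : k = 0 := by
      rcases (by simpa using h0 : k = 0 ∨ g 0 = 0) with h | h
      · exact h
      · exact absurd h (hg 0)
    subst hk0
    have h1 := congrFun hk 1
    have h2 := congrFun hk 2
    simp only [Pi.add_apply, Pi.smul_apply, smul_eq_mul, zero_mul, add_zero] at h1 h2
    simp only [Matrix.cons_val_one, Matrix.head_cons] at h1
    have : u' = u := by simpa using h1
    have : v' = v := by simpa using h2
    simp_all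
  have hLsurj : Function.Surjective L := by
    rintro ⟨⟨A, hA⟩, hfix⟩
    have himg : A.image (fun x => x + g) = A :=
      congrArg Subtype.val hfix
    have hstep : ∀ x ∈ A, x + g ∈ A := by
      intro x hx
      rw [← himg]
      exact Finset.mem_image_of_mem _ hx
    obtain ⟨⟨a, haA⟩, ha0⟩ := (coord_bij hA).surjective 0
    simp only at ha0
    have hline : ∀ n : ℕ, a + (n : ZMod p) • g ∈ A := by
      intro n
      induction n with
      | zero => simpa using haA
      | succ n ih =>
        have : a + ((n : ZMod p) + 1) • g = (a + (n : ZMod p) • g) + g := by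
          rw [add_smul, one_smul, add_assoc]
        push_cast
        rw [this]
        exact hstep _ ih
    have hsub : linePat g (a 1) (a 2) ⊆ A := by
      intro b hb
      simp only [linePat, Finset.mem_image, Finset.mem_univ, true_and] at hb
      obtain ⟨k, rfl⟩ := hb
      obtain ⟨n, rfl⟩ := ZMod.natCast_rightInverse.surjective k
      have hav : (![0, a 1, a 2] : Pt p) = a := by
        funext i
        fin_cases i <;> simp [ha0.symm]
      rw [hav]
      exact hline n
    have hAeq : A = linePat g (a 1) (a 2) :=
      (Finset.eq_of_subset_of_card_le hsub (by
        rw [hA.1, (linePat_isPattern hg (a 1) (a 2)).1])).symm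
    exact ⟨(a 1, a 2), Subtype.ext (Subtype.ext hAeq.symm)⟩
  rw [← Nat.card_eq_of_bijective L ⟨hLinj, hLsurj⟩]
  simp [Nat.card_eq_fintype_card, ZMod.card, sq]

end

end Stmt13Aux

open Stmt13Aux in
theorem stmt13 (p : ℕ) (hp : p.Prime) :
    p ^ 3 * Set.ncard (orbitsOfPatterns p) = p.factorial ^ 2 + (p - 1) ^ 3 * p ^ 2 := by
  haveI : Fact p.Prime := ⟨hp⟩
  haveI : Fintype (Quotient (AddAction.orbitRel (Pt p) (Xp p))) := Fintype.ofFinite _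
  have hcard : ∀ g : Pt p,
      Fintype.card (AddAction.fixedBy (Xp p) g) = Nat.card (AddAction.fixedBy (Xp p) g) :=
    fun g => (Nat.card_eq_fintype_card).symm
  have burnside := AddAction.sum_card_fixedBy_eq_card_orbits_mul_card_addGroup (Pt p) (Xp p)
  -- compute the sum
  have hS : (Finset.univ.filter (fun g : Pt p => ∀ i, g i ≠ 0)) =
      Fintype.piFinset (fun _ : Fin 3 => Finset.univ.filter (fun x : ZMod p => x ≠ 0)) := by
    ext g
    simp [Fintype.mem_piFinset]
  have hScard : (Finset.univ.filter (fun g : Pt p => ∀ i, g i ≠ 0)).card = (p - 1) ^ 3 := by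
    rw [hS, Fintype.card_piFinset]
    have : (Finset.univ.filter (fun x : ZMod p => x ≠ 0)).card = p - 1 := by
      rw [Finset.filter_ne', Finset.card_erase_of_mem (Finset.mem_univ _),
        Finset.card_univ, ZMod.card]
    simp [this]
  have hsum : (∑ g : Pt p, Fintype.card (AddAction.fixedBy (Xp p) g)) =
      p.factorial ^ 2 + (p - 1) ^ 3 * p ^ 2 := by
    rw [← Finset.sum_filter_add_sum_filter_not Finset.univ (fun g : Pt p => ∀ i, g i ≠ 0)]
    have h1 : (∑ g ∈ Finset.univ.filter (fun g : Pt p => ∀ i, g i ≠ 0),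
        Fintype.card (AddAction.fixedBy (Xp p) g)) = (p - 1) ^ 3 * p ^ 2 := by
      rw [Finset.sum_congr rfl (fun g hg => by
        rw [hcard g, card_fixed_of_ne_zero_coords (Finset.mem_filter.1 hg).2]),
        Finset.sum_const, hScard, smul_eq_mul]
    have h2 : (∑ g ∈ Finset.univ.filter (fun g : Pt p => ¬ ∀ i, g i ≠ 0),
        Fintype.card (AddAction.fixedBy (Xp p) g)) = p.factorial ^ 2 := by
      have h0mem : (0 : Pt p) ∈ Finset.univ.filter (fun g : Pt p => ¬ ∀ i, g i ≠ 0) := by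
        simp
      rw [Finset.sum_eq_single_of_mem 0 h0mem (fun g hg hg0 => by
        obtain ⟨i, hi⟩ := by push_neg at hg; exact (Finset.mem_filter.1 hg).2
        rw [hcard g, card_fixed_of_zero_coord hg0 i hi]),
        hcard 0, card_fixed_zero]
    rw [h1, h2, add_comm]
  rw [hsum] at burnside
  rw [ncard_orbits, Nat.card_eq_fintype_card, burnside, Fintype.card_fun, ZMod.card,
    Fintype.card_fin, mul_comm]
end

section
/- The number of orbits of the translation action of the group (ℤ/4ℤ)³ on the set X(4) of patterns is 12. -/
namespace Stmt14Aux

abbrev Pt := Fin 3 → ZMod 4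

/-- Twelve orbit representatives. -/
def reps : Fin 12 → Finset Pt
| 0 => {![0,0,0], ![1,1,1], ![2,2,2], ![3,3,3]}
| 1 => {![0,0,0], ![1,1,1], ![2,2,3], ![3,3,2]}
| 2 => {![0,0,0], ![1,1,1], ![2,3,2], ![3,2,3]}
| 3 => {![0,0,0], ![1,1,1], ![2,3,3], ![3,2,2]}
| 4 => {![0,0,0], ![1,1,2], ![2,3,1], ![3,2,3]}
| 5 => {![0,0,0], ![1,1,2], ![2,3,3], ![3,2,1]}
| 6 => {![0,0,0], ![1,1,3], ![2,2,2], ![3,3,1]}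
| 7 => {![0,0,0], ![1,1,3], ![2,3,1], ![3,2,2]}
| 8 => {![0,0,0], ![1,1,3], ![2,3,2], ![3,2,1]}
| 9 => {![0,0,0], ![1,3,1], ![2,2,2], ![3,1,3]}
| 10 => {![0,0,0], ![1,3,1], ![2,2,3], ![3,1,2]}
| 11 => {![0,0,0], ![1,3,3], ![2,2,2], ![3,1,1]}

set_option maxRecDepth 10000 in
lemma reps_pattern : ∀ k, IsPattern 4 (reps k) := by unfold IsPattern; decide

lemma reps_zero_mem : ∀ k, (0 : Pt) ∈ reps k := by decide

lemma reps_disjoint : ∀ i j : Fin 12, i ≠ j → ∀ g ∈ (reps i).image (fun x => -x),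
    reps j ≠ (reps i).image (fun x => x + g) := by decide

set_option maxHeartbeats 10000000 in
set_option maxRecDepth 100000 in
set_option synthInstance.maxSize 2000 in
lemma cover : ∀ a : Pt, (∀ i, a i ≠ 0) → ∀ b : Pt, (∀ i, b i ≠ 0 ∧ b i ≠ a i) →
    ∀ c : Pt, (∀ i, c i ≠ 0 ∧ c i ≠ a i ∧ c i ≠ b i) →
    ∃ k : Fin 12, ∃ g ∈ (reps k).image (fun x => -x),
      ({0,a,b,c} : Finset Pt) = (reps k).image (fun x => x + g) := by decide

lemma image_image_add (A : Finset Pt) (g h : Pt) :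
    (A.image (fun x => x + g)).image (fun x => x + h) = A.image (fun x => x + (g + h)) := by
  rw [Finset.image_image]
  congr 1
  funext x
  simp [add_assoc]

lemma orbitOf_image (A : Finset Pt) (g : Pt) :
    orbitOf 4 (A.image (fun x => x + g)) = orbitOf 4 A := by
  ext B
  constructor
  · rintro ⟨h, rfl⟩
    exact ⟨g + h, by rw [image_image_add]⟩
  · rintro ⟨h, rfl⟩
    have hgh : g + (h - g) = h := by ring
    refine ⟨h - g, ?_⟩
    rw [image_image_add, hgh]

end Stmt14Aux

open Stmt14Aux in
theorem stmt14 : Set.ncard (orbitsOfPatterns 4) = 12 := by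
  set f : Fin 12 → Set (Finset Pt) := fun k => orbitOf 4 (reps k) with hf
  have hrange : orbitsOfPatterns 4 = Set.range f := by
    ext O
    constructor
    · rintro ⟨A, ⟨hcard, hsep⟩, rfl⟩
      have hne : A.Nonempty := Finset.card_pos.mp (by rw [hcard]; norm_num)
      obtain ⟨x, hx⟩ := hne
      set B : Finset Pt := A.image (fun y => y + (-x)) with hBdef
      have h0 : (0 : Pt) ∈ B := Finset.mem_image.mpr ⟨x, hx, by simp⟩
      have hBcard : B.card = 4 := by
        rw [hBdef, Finset.card_image_of_injective _ (add_left_injective _), hcard]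
      have hBsep : ∀ u ∈ B, ∀ v ∈ B, u ≠ v → ∀ i, u i ≠ v i := by
        rintro u hu v hv huv i
        obtain ⟨u', hu', rfl⟩ := Finset.mem_image.mp hu
        obtain ⟨v', hv', rfl⟩ := Finset.mem_image.mp hv
        have huv' : u' ≠ v' := fun h => huv (by rw [h])
        have := hsep u' hu' v' hv' huv' i
        simpa using fun h => this (by simpa using h)
      have h3 : (B.erase 0).card = 3 := by rw [Finset.card_erase_of_mem h0, hBcard]
      obtain ⟨a, b, c, hab, hac, hbc, hE⟩ := Finset.card_eq_three.mp h3
      have haB : a ∈ B := Finset.mem_of_mem_erase (hE ▸ (by simp : a ∈ ({a,b,c} : Finset Pt)))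
      have hbB : b ∈ B := Finset.mem_of_mem_erase (hE ▸ (by simp : b ∈ ({a,b,c} : Finset Pt)))
      have hcB : c ∈ B := Finset.mem_of_mem_erase (hE ▸ (by simp : c ∈ ({a,b,c} : Finset Pt)))
      have ha0 : a ≠ 0 := Finset.ne_of_mem_erase (hE ▸ (by simp : a ∈ ({a,b,c} : Finset Pt)))
      have hb0 : b ≠ 0 := Finset.ne_of_mem_erase (hE ▸ (by simp : b ∈ ({a,b,c} : Finset Pt)))
      have hc0 : c ≠ 0 := Finset.ne_of_mem_erase (hE ▸ (by simp : c ∈ ({a,b,c} : Finset Pt)))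
      have hB : B = {0, a, b, c} := by
        rw [← Finset.insert_erase h0, hE]
      obtain ⟨k, g, hg, hBk⟩ := cover a (fun i => hBsep a haB 0 h0 ha0 i)
        b (fun i => ⟨hBsep b hbB 0 h0 hb0 i, hBsep b hbB a haB (Ne.symm hab) i⟩)
        c (fun i => ⟨hBsep c hcB 0 h0 hc0 i, hBsep c hcB a haB (Ne.symm hac) i,
            hBsep c hcB b hbB (Ne.symm hbc) i⟩)
      have hA : A = B.image (fun y => y + x) := by
        rw [hBdef, image_image_add]
        simp
      refine ⟨k, ?_⟩
      show orbitOf 4 (reps k) = orbitOf 4 A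
      have e2 : B = (reps k).image (fun x => x + g) := hB.trans hBk
      calc orbitOf 4 (reps k) = orbitOf 4 B := by rw [e2, orbitOf_image]
        _ = orbitOf 4 A := by rw [hBdef, orbitOf_image]
    · rintro ⟨k, rfl⟩
      exact ⟨reps k, reps_pattern k, rfl⟩
  have hinj : Function.Injective f := by
    intro i j hij
    by_contra hne
    have h1 : reps j ∈ f j := ⟨0, by simp⟩
    rw [← hij] at h1
    obtain ⟨g, hg⟩ := h1
    have h0j : (0 : Pt) ∈ (reps i).image (fun x => x + g) := by rw [← hg]; exact reps_zero_mem j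
    obtain ⟨y, hy, hy0⟩ := Finset.mem_image.mp h0j
    have hgmem : g ∈ (reps i).image (fun x => -x) :=
      Finset.mem_image.mpr ⟨y, hy, by rw [neg_eq_of_add_eq_zero_right hy0]⟩
    exact reps_disjoint i j hne g hgmem hg
  rw [hrange, ← Set.image_univ, Set.ncard_image_of_injective _ hinj, Set.ncard_univ]
  simp
end
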